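/- arXiv:1805.08270 — 7 statements merged into one kernel-verified Lean document; each statement's English description precedes it below -/
import Mathlib

section
/- Let G be a finite simple graph that is (C4,P6)-free and contains an induced 5-cycle C = v1v2v3v4v5, and let i ∈ {1,...,5} (indices modulo 5). Then for every connected component A of the subgraph of G induced by S(i), every vertex of S(i-2,i-1,i) ∪ S(i,i+1,i+2) is either complete or anti-complete to the vertex set of A. -/
open SimpleGraph

/-- `G` contains no induced subgraph isomorphic to `H` (`H`-freeness, via graph embeddings). -/
def Free {V W : Type*} (G : SimpleGraph V) (H : SimpleGraph W) : Prop :=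
  IsEmpty (H ↪g G)

/-- `v 1, v 2, v 3, v 4, v 0` are the vertices `v₁,…,v₅` of an induced 5-cycle of `G`
(in cyclic order, indices taken modulo 5, with `v 0` playing the role of `v₅`). -/
def IsInducedC5 {V : Type*} (G : SimpleGraph V) (v : ZMod 5 → V) : Prop :=
  Function.Injective v ∧ ∀ i j, G.Adj (v i) (v j) ↔ (j = i + 1 ∨ i = j + 1)

/-- `S(X)`: the vertices outside the cycle whose neighbourhood on the cycle is exactly
`{v i : i ∈ X}`. -/
def cycS {V : Type*} (G : SimpleGraph V) (v : ZMod 5 → V) (X : Set (ZMod 5)) : Set V :=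
  {u | (∀ i, u ≠ v i) ∧ ∀ i, (G.Adj u (v i) ↔ i ∈ X)}

/-- `S_j`: the vertices outside the cycle with exactly `j` neighbours on the cycle. -/
def cycSdeg {V : Type*} (G : SimpleGraph V) (v : ZMod 5 → V) (j : ℕ) : Set V :=
  {u | (∀ i, u ≠ v i) ∧ {i : ZMod 5 | G.Adj u (v i)}.ncard = j}

/-- `A` is complete to `B`: every vertex of `A` is adjacent to every vertex of `B`. -/
def CompleteTo {V : Type*} (G : SimpleGraph V) (A B : Set V) : Prop :=
  ∀ a ∈ A, ∀ b ∈ B, G.Adj a b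

/-- `A` is anti-complete to `B`: there are no edges between `A` and `B`. -/
def AntiCompleteTo {V : Type*} (G : SimpleGraph V) (A B : Set V) : Prop :=
  ∀ a ∈ A, ∀ b ∈ B, ¬ G.Adj a b

lemma aux_p6 {V : Type*} {G : SimpleGraph V} (hP6 : _root_.Free G (pathGraph 6))
    (b a s w3 w4 w5 : V)
    (e1 : G.Adj b a) (e2 : G.Adj a s) (e3 : G.Adj s w3)
    (e4 : G.Adj w3 w4) (e5 : G.Adj w4 w5)
    (n1 : ¬G.Adj b s) (n2 : ¬G.Adj b w3) (n3 : ¬G.Adj b w4) (n4 : ¬G.Adj b w5)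
    (n5 : ¬G.Adj a w3) (n6 : ¬G.Adj a w4) (n7 : ¬G.Adj a w5)
    (n8 : ¬G.Adj s w4) (n9 : ¬G.Adj s w5) (n10 : ¬G.Adj w3 w5) : False := by
  have d1 : b ≠ a := e1.ne
  have d2 : b ≠ s := fun h => n2 (h ▸ e3)
  have d3 : b ≠ w3 := fun h => n3 (h ▸ e4)
  have d4 : b ≠ w4 := fun h => n4 (h ▸ e5)
  have d5 : b ≠ w5 := fun h => n3 (h ▸ e5.symm)
  have d6 : a ≠ s := e2.ne
  have d7 : a ≠ w3 := fun h => n2 (h ▸ e1)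
  have d8 : a ≠ w4 := fun h => n8 ((h ▸ e2).symm)
  have d9 : a ≠ w5 := fun h => n9 ((h ▸ e2).symm)
  have d10 : s ≠ w3 := e3.ne
  have d11 : s ≠ w4 := fun h => n9 (h ▸ e5)
  have d12 : s ≠ w5 := fun h => n8 ((h ▸ e5).symm)
  have d13 : w3 ≠ w4 := e4.ne
  have d14 : w3 ≠ w5 := fun h => n9 (h ▸ e3)
  have d15 : w4 ≠ w5 := e5.ne
  let x : Fin 6 → V := fun p =>
    if p.val = 0 then b else if p.val = 1 then a else if p.val = 2 then s
    else if p.val = 3 then w3 else if p.val = 4 then w4 else w5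
  have hinj : Function.Injective x := by
    intro p q h
    fin_cases p <;> fin_cases q <;> simp only [x] at h <;> norm_num at h ⊢ <;> simp_all
  have hadj : ∀ p q : Fin 6, G.Adj (x p) (x q) ↔ (pathGraph 6).Adj p q := by
    intro p q
    fin_cases p <;> fin_cases q <;> simp only [x] <;>
      norm_num [pathGraph_adj] <;>
      first
        | exact G.irrefl
        | assumption
        | exact (by apply SimpleGraph.Adj.symm; assumption)
        | (intro h; exact absurd h (by assumption))
        | (intro h; exact absurd h.symm (by assumption))
  exact hP6.false ⟨⟨x, hinj⟩, fun {p q} => hadj p q⟩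

lemma flip_pair {V : Type*} (G' : SimpleGraph V) (P : V → Prop) :
    ∀ {a b : V}, G'.Walk a b → P a → ¬ P b →
      ∃ x y, G'.Adj x y ∧ P x ∧ ¬ P y := by
  intro a b w
  induction w with
  | nil => intro ha hb; exact absurd ha hb
  | @cons u x b h' p ih =>
    intro ha hb
    by_cases hx : P x
    · exact ih hx hb
    · exact ⟨u, x, h', ha, hx⟩

theorem stmt_0 {V : Type*} [Fintype V] (G : SimpleGraph V)
    (hC4 : _root_.Free G (cycleGraph 4)) (hP6 : _root_.Free G (pathGraph 6))
    (v : ZMod 5 → V) (hv : IsInducedC5 G v) (i : ZMod 5)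
    (c : (G.induce (cycS G v {i})).ConnectedComponent)
    (s : V) (hs : s ∈ cycS G v {i - 2, i - 1, i} ∪ cycS G v {i, i + 1, i + 2}) :
    CompleteTo G {s} (Subtype.val '' c.supp) ∨
      AntiCompleteTo G {s} (Subtype.val '' c.supp) := by
  by_contra hcon
  push_neg at hcon
  obtain ⟨h1, h2⟩ := hcon
  -- extract a neighbour and a non-neighbour of s in the component
  have hb' : ∃ x ∈ c.supp, ¬ G.Adj s (x : V) := by
    by_contra hc; push_neg at hc
    exact h1 (fun p hp q hq => by
      rw [Set.mem_singleton_iff] at hp; subst hp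
      obtain ⟨x, hx, rfl⟩ := hq; exact hc x hx)
  have ha' : ∃ x ∈ c.supp, G.Adj s (x : V) := by
    by_contra hc; push_neg at hc
    exact h2 (fun p hp q hq => by
      rw [Set.mem_singleton_iff] at hp; subst hp
      obtain ⟨x, hx, rfl⟩ := hq; exact hc x hx)
  obtain ⟨pb, hpb, hnb⟩ := hb'
  obtain ⟨pa, hpa, hna⟩ := ha'
  have hr : (G.induce (cycS G v {i})).Reachable pa pb :=
    ConnectedComponent.exact (by
      rw [(ConnectedComponent.mem_supp_iff _ _).mp hpa,
        (ConnectedComponent.mem_supp_iff _ _).mp hpb])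
  obtain ⟨w⟩ := hr
  obtain ⟨x, y, hxy, hPx, hPy⟩ :=
    flip_pair (G.induce (cycS G v {i})) (fun z => G.Adj s (z : V)) w hna hnb
  have hxy' : G.Adj (x : V) (y : V) := hxy
  obtain ⟨-, hxadj⟩ := x.2
  obtain ⟨-, hyadj⟩ := y.2
  -- non-adjacency of a := ↑x and b := ↑y to cycle vertices other than v i
  have hax : ∀ k : ZMod 5, k ≠ i → ¬ G.Adj (x : V) (v k) := by
    intro k hk h
    exact hk ((hxadj k).mp h)
  have hay : ∀ k : ZMod 5, k ≠ i → ¬ G.Adj (y : V) (v k) := by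
    intro k hk h
    exact hk ((hyadj k).mp h)
  have hz : ∀ c : ZMod 5, c ≠ 0 → i + c ≠ i := fun c hc h =>
    hc (by rwa [add_eq_left] at h)
  rcases hs with hsS | hsS
  · -- s ∈ S(i-2, i-1, i);  path:  y - x - s - v(i+3) - v(i+2) - v(i+1)
    have h5 : (5 : ZMod 5) = 0 := by decide
    have e2' : i - 2 = i + 3 := by linear_combination -h5
    have e1' : i - 1 = i + 4 := by linear_combination -h5
    rw [e2', e1'] at hsS
    obtain ⟨-, hsadj⟩ := hsS
    have hsw3 : G.Adj s (v (i + 3)) := (hsadj _).mpr (by simp)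
    have hsw4 : ¬ G.Adj s (v (i + 2)) := by
      rw [hsadj]
      simp only [Set.mem_insert_iff, Set.mem_singleton_iff, add_right_inj, add_eq_left]
      decide
    have hsw5 : ¬ G.Adj s (v (i + 1)) := by
      rw [hsadj]
      simp only [Set.mem_insert_iff, Set.mem_singleton_iff, add_right_inj, add_eq_left]
      decide
    have hw34 : G.Adj (v (i + 3)) (v (i + 2)) := (hv.2 _ _).mpr (Or.inr (by ring))
    have hw45 : G.Adj (v (i + 2)) (v (i + 1)) := (hv.2 _ _).mpr (Or.inr (by ring))
    have hw35 : ¬ G.Adj (v (i + 3)) (v (i + 1)) := by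
      rw [hv.2]
      simp only [add_assoc, add_right_inj]
      decide
    exact aux_p6 hP6 (y : V) (x : V) s (v (i + 3)) (v (i + 2)) (v (i + 1))
      hxy'.symm hPx.symm hsw3 hw34 hw45
      (fun h => hPy h.symm)
      (hay _ (hz 3 (by decide))) (hay _ (hz 2 (by decide))) (hay _ (hz 1 (by decide)))
      (hax _ (hz 3 (by decide))) (hax _ (hz 2 (by decide))) (hax _ (hz 1 (by decide)))
      hsw4 hsw5 hw35
  · -- s ∈ S(i, i+1, i+2);  path:  y - x - s - v(i+2) - v(i+3) - v(i+4)
    obtain ⟨-, hsadj⟩ := hsS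
    have hsw3 : G.Adj s (v (i + 2)) := (hsadj _).mpr (by simp)
    have hsw4 : ¬ G.Adj s (v (i + 3)) := by
      rw [hsadj]
      simp only [Set.mem_insert_iff, Set.mem_singleton_iff, add_right_inj, add_eq_left]
      decide
    have hsw5 : ¬ G.Adj s (v (i + 4)) := by
      rw [hsadj]
      simp only [Set.mem_insert_iff, Set.mem_singleton_iff, add_right_inj, add_eq_left]
      decide
    have hw34 : G.Adj (v (i + 2)) (v (i + 3)) := (hv.2 _ _).mpr (Or.inl (by ring))
    have hw45 : G.Adj (v (i + 3)) (v (i + 4)) := (hv.2 _ _).mpr (Or.inl (by ring))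
    have hw35 : ¬ G.Adj (v (i + 2)) (v (i + 4)) := by
      rw [hv.2]
      simp only [add_assoc, add_right_inj]
      decide
    exact aux_p6 hP6 (y : V) (x : V) s (v (i + 2)) (v (i + 3)) (v (i + 4))
      hxy'.symm hPx.symm hsw3 hw34 hw45
      (fun h => hPy h.symm)
      (hay _ (hz 2 (by decide))) (hay _ (hz 3 (by decide))) (hay _ (hz 4 (by decide)))
      (hax _ (hz 2 (by decide))) (hax _ (hz 3 (by decide))) (hax _ (hz 4 (by decide)))
      hsw4 hsw5 hw35
end

section
/- Let G be a finite simple graph that is (C4,P6)-free and contains an induced 5-cycle C = v1v2v3v4v5, and let i ∈ {1,...,5} (indices modulo 5). If x ∈ S(i) and y ∈ S(i-2,i+2) are adjacent, then no vertex of S_5 is adjacent to exactly one of x and y. -/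
open SimpleGraph

set_option linter.unreachableTactic false
set_option linter.unusedTactic false

lemma c4_of_cycle {V : Type*} (G : SimpleGraph V) {a b c d : V}
    (hab : G.Adj a b) (hbc : G.Adj b c) (hcd : G.Adj c d) (hda : G.Adj d a)
    (hac : ¬G.Adj a c) (hbd : ¬G.Adj b d) (hac' : a ≠ c) (hbd' : b ≠ d) :
    Nonempty (cycleGraph 4 ↪g G) := by
  refine ⟨⟨⟨![a,b,c,d], ?_⟩, ?_⟩⟩
  · intro u w h
    fin_cases u <;> fin_cases w <;>
      simp only [Matrix.cons_val_zero, Matrix.cons_val_one, Matrix.head_cons,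
        Matrix.cons_val_two, Matrix.tail_cons, Matrix.cons_val_three, Fin.isValue,
        Matrix.cons_val_fin_one, Fin.mk_zero, Fin.mk_one] at h <;>
      first
        | rfl
        | exact absurd h hab.ne | exact absurd h hbc.ne | exact absurd h hcd.ne
        | exact absurd h hda.ne.symm
        | exact absurd h.symm hab.ne | exact absurd h.symm hbc.ne
        | exact absurd h.symm hcd.ne | exact absurd h hda.ne'.symm
        | exact absurd h hac' | exact absurd h.symm hac'
        | exact absurd h hbd' | exact absurd h.symm hbd'
        | exact absurd h hda.ne'
  · intro u w
    fin_cases u <;> fin_cases w <;>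
      simp only [Function.Embedding.coeFn_mk, Matrix.cons_val_zero, Matrix.cons_val_one,
        Matrix.head_cons, Matrix.cons_val_two, Matrix.tail_cons, Matrix.cons_val_three,
        Fin.isValue, Matrix.cons_val_fin_one, Fin.mk_zero, Fin.mk_one] <;>
      simp +decide [cycleGraph_adj', Fin.ext_iff, Matrix.cons_val_succ] <;>
      first
        | exact hab | exact hbc | exact hcd | exact hda
        | exact hab.symm | exact hbc.symm | exact hcd.symm | exact hda.symm
        | exact hac | exact hbd
        | exact fun h => hac h.symm | exact fun h => hbd h.symm
        | exact G.irrefl _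

theorem stmt_1 {V : Type*} [Fintype V] (G : SimpleGraph V)
    (hC4 : _root_.Free G (cycleGraph 4)) (hP6 : _root_.Free G (pathGraph 6))
    (v : ZMod 5 → V) (hv : IsInducedC5 G v) (i : ZMod 5)
    (x y : V) (hx : x ∈ cycS G v {i}) (hy : y ∈ cycS G v {i - 2, i + 2})
    (hxy : G.Adj x y) :
    ∀ u ∈ cycSdeg G v 5, (G.Adj u x ↔ G.Adj u y) := by
  obtain ⟨hxne, hxadj⟩ := hx
  obtain ⟨hyne, hyadj⟩ := hy
  intro u hu
  obtain ⟨hune, hcard⟩ := hu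
  have huniv : {j : ZMod 5 | G.Adj u (v j)} = Set.univ := by
    apply Set.eq_of_subset_of_ncard_le (Set.subset_univ _) _ Set.finite_univ
    rw [hcard, Set.ncard_univ]
    simp
  have hall : ∀ j, G.Adj u (v j) := fun j => by
    have : j ∈ {j : ZMod 5 | G.Adj u (v j)} := huniv ▸ Set.mem_univ j
    exact this
  have hxi2 : ¬ G.Adj x (v (i + 2)) := by
    rw [hxadj]
    intro h
    have : (2 : ZMod 5) = 0 := by
      have := congrArg (· - i) (Set.mem_singleton_iff.mp h)
      simpa using this
    exact absurd this (by decide)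
  have hyi : ¬ G.Adj y (v i) := by
    rw [hyadj]
    rintro (h | h)
    · have : (2 : ZMod 5) = 0 := by
        have := congrArg (· - i) h
        simpa [sub_sub] using this
      exact absurd this (by decide)
    · have : (2 : ZMod 5) = 0 := by
        have := congrArg (· - i) h
        simpa using this.symm
      exact absurd this (by decide)
  have hyv : G.Adj y (v (i + 2)) := by
    rw [hyadj]; right; rfl
  have hxv : G.Adj x (v i) := by rw [hxadj]; rfl
  have hux : u ≠ x := fun h => hxi2 (h ▸ hall (i + 2))
  have huy : u ≠ y := fun h => hyi (h ▸ hall i)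
  constructor
  · intro hax
    by_contra hay
    exact hC4.false (Classical.choice (c4_of_cycle G hxy hyv (hall (i+2)).symm hax
      hxi2 (fun h => hay h.symm) (hxne _) huy.symm))
  · intro hay
    by_contra hax
    exact hC4.false (Classical.choice (c4_of_cycle G hxy.symm hxv (hall i).symm hay
      hyi (fun h => hax h.symm) (hyne _) hux.symm))
end

section
/- Let G be a finite simple graph that is (C4,P6)-free and contains an induced 5-cycle C = v1v2v3v4v5, and let i ∈ {1,...,5} (indices modulo 5). If a vertex x ∈ S(i-2,i+2) has a neighbour in S(i-2,i-1,i) ∪ S(i,i+1,i+2), then x is adjacent to every vertex of S_5. -/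
open SimpleGraph

lemma no_c4 {V : Type*} {G : SimpleGraph V} (h : _root_.Free G (cycleGraph 4))
    {a b c d : V} (hab : G.Adj a b) (hbc : G.Adj b c) (hcd : G.Adj c d)
    (hda : G.Adj d a) (hac : ¬ G.Adj a c) (hbd : ¬ G.Adj b d)
    (hac' : a ≠ c) (hbd' : b ≠ d) : False := by
  apply h.false
  have hca : ¬ G.Adj c a := fun h' => hac (G.adj_symm h')
  have hdb : ¬ G.Adj d b := fun h' => hbd (G.adj_symm h')
  refine ⟨⟨![a,b,c,d], ?_⟩, ?_⟩
  · have := hab.ne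
    have := hbc.ne
    have := hcd.ne
    have := hda.ne'
    intro p q hpq
    fin_cases p <;> fin_cases q <;> simp_all
  · intro p q
    change G.Adj (![a,b,c,d] p) (![a,b,c,d] q) ↔ (cycleGraph 4).Adj p q
    fin_cases p <;> fin_cases q <;>
      simp_all [cycleGraph_adj, hab, hbc, hcd, hda, hab.symm, hbc.symm, hcd.symm, hda.symm,
        G.irrefl] <;> decide

theorem stmt_2 {V : Type*} [Fintype V] (G : SimpleGraph V)
    (hC4 : _root_.Free G (cycleGraph 4)) (hP6 : _root_.Free G (pathGraph 6))
    (v : ZMod 5 → V) (hv : IsInducedC5 G v) (i : ZMod 5)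
    (x : V) (hx : x ∈ cycS G v {i - 2, i + 2})
    (hnbr : ∃ s ∈ cycS G v {i - 2, i - 1, i} ∪ cycS G v {i, i + 1, i + 2}, G.Adj x s) :
    ∀ u ∈ cycSdeg G v 5, G.Adj x u := by
  obtain ⟨hvinj, hvadj⟩ := hv
  obtain ⟨hxne, hxadj⟩ := hx
  obtain ⟨s, hs, hxs⟩ := hnbr
  intro u hu
  obtain ⟨hune, hucard⟩ := hu
  -- `u` is adjacent to every cycle vertex
  have huadj : ∀ j : ZMod 5, G.Adj u (v j) := by
    have h5 : {j : ZMod 5 | G.Adj u (v j)} = Set.univ := by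
      apply Set.eq_of_subset_of_ncard_le (Set.subset_univ _)
      rw [hucard, Set.ncard_univ, Nat.card_eq_fintype_card, ZMod.card]
    intro j
    exact (h5 ▸ Set.mem_univ j : j ∈ {j : ZMod 5 | G.Adj u (v j)})
  -- rewriting helpers
  have him2 : i - 2 = i + 3 := by rw [sub_eq_add_neg]; congr 1
  have him1 : i - 1 = i + 4 := by rw [sub_eq_add_neg]; congr 1
  have hi0 : i = i + 0 := (add_zero i).symm
  -- cycle adjacency in terms of offsets
  have hcyc : ∀ a b : ZMod 5, ¬ (b = a + 1 ∨ a = b + 1) → ¬ G.Adj (v (i + a)) (v (i + b)) := by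
    intro a b hab h
    rw [hvadj, add_assoc, add_assoc, add_right_inj, add_right_inj] at h
    exact hab h
  have hvne : ∀ a b : ZMod 5, a ≠ b → v (i + a) ≠ v (i + b) := by
    intro a b hab h
    exact hab (add_left_cancel (hvinj h))
  -- neighbourhood of `x` in terms of offsets
  have hmemx : ∀ c : ZMod 5, G.Adj x (v (i + c)) ↔ c = 3 ∨ c = 2 := by
    intro c
    rw [hxadj (i + c)]
    simp only [Set.mem_insert_iff, Set.mem_singleton_iff, him2, add_right_inj]
  have hx3 : G.Adj x (v (i + 3)) := (hmemx 3).2 (Or.inl rfl)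
  have hx2 : G.Adj x (v (i + 2)) := (hmemx 2).2 (Or.inr rfl)
  have hxu : x ≠ u := by
    intro h
    exact absurd ((hmemx 0).1 (h ▸ huadj (i + 0))) (by decide)
  by_contra hadj
  cases hs with
  | inl hs =>
    obtain ⟨hsne, hsadj⟩ := hs
    have hmems : ∀ c : ZMod 5, G.Adj s (v (i + c)) ↔ c = 3 ∨ c = 4 ∨ c = 0 := by
      intro c
      rw [hsadj (i + c)]
      simp only [Set.mem_insert_iff, Set.mem_singleton_iff, him2, him1, add_right_inj,
        add_eq_left]
    have hs3 : G.Adj s (v (i + 3)) := (hmems 3).2 (Or.inl rfl)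
    have hs0 : G.Adj s (v (i + 0)) := (hmems 0).2 (Or.inr (Or.inr rfl))
    have hns2 : ¬ G.Adj s (v (i + 2)) := by
      intro h; exact absurd ((hmems 2).1 h) (by decide)
    have hsu : G.Adj s u := by
      by_contra hsu
      exact no_c4 hC4 hs3 (huadj (i + 3)).symm (huadj (i + 0)) hs0.symm hsu
        (hcyc 3 0 (by decide))
        (fun h => hns2 (h ▸ huadj (i + 2))) (hvne 3 0 (by decide))
    exact no_c4 hC4 hxs hsu (huadj (i + 2)) hx2.symm hadj hns2 hxu (hsne (i + 2))
  | inr hs =>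
    obtain ⟨hsne, hsadj⟩ := hs
    have hmems : ∀ c : ZMod 5, G.Adj s (v (i + c)) ↔ c = 0 ∨ c = 1 ∨ c = 2 := by
      intro c
      rw [hsadj (i + c)]
      simp only [Set.mem_insert_iff, Set.mem_singleton_iff, add_right_inj, add_eq_left]
    have hs0 : G.Adj s (v (i + 0)) := (hmems 0).2 (Or.inl rfl)
    have hs2 : G.Adj s (v (i + 2)) := (hmems 2).2 (Or.inr (Or.inr rfl))
    have hns3 : ¬ G.Adj s (v (i + 3)) := by
      intro h; exact absurd ((hmems 3).1 h) (by decide)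
    have hsu : G.Adj s u := by
      by_contra hsu
      exact no_c4 hC4 hs0 (huadj (i + 0)).symm (huadj (i + 2)) hs2.symm hsu
        (hcyc 0 2 (by decide))
        (fun h => hns3 (h ▸ huadj (i + 3))) (hvne 0 2 (by decide))
    exact no_c4 hC4 hxs hsu (huadj (i + 3)) hx3.symm hadj hns3 hxu (hsne (i + 3))
end

section
/- Let G be a finite simple graph that is (C4,P6)-free and contains an induced 5-cycle C = v1v2v3v4v5, and let i ∈ {1,...,5} (indices modulo 5). Then every vertex of S(i-2,i+2) has no neighbour in S(i-2,i-1,i) or has no neighbour in S(i,i+1,i+2); that is, each vertex of S(i-2,i+2) is anti-complete to at least one of the sets S(i-2,i-1,i) and S(i,i+1,i+2). -/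
open SimpleGraph

lemma c4_of {V : Type*} (G : SimpleGraph V) (w0 w1 w2 w3 : V)
    (h01 : G.Adj w0 w1) (h12 : G.Adj w1 w2) (h23 : G.Adj w2 w3) (h30 : G.Adj w3 w0)
    (h02 : ¬ G.Adj w0 w2) (h13 : ¬ G.Adj w1 w3)
    (d01 : w0 ≠ w1) (d02 : w0 ≠ w2) (d03 : w0 ≠ w3)
    (d12 : w1 ≠ w2) (d13 : w1 ≠ w3) (d23 : w2 ≠ w3) :
    Nonempty (cycleGraph 4 ↪g G) := by
  refine ⟨⟨⟨![w0, w1, w2, w3], ?_⟩, ?_⟩⟩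
  · intro p q h
    fin_cases p <;> fin_cases q <;>
      first
      | rfl
      | exact absurd h d01 | exact absurd h d02 | exact absurd h d03
      | exact absurd h d12 | exact absurd h d13 | exact absurd h d23
      | exact absurd h.symm d01 | exact absurd h.symm d02 | exact absurd h.symm d03
      | exact absurd h.symm d12 | exact absurd h.symm d13 | exact absurd h.symm d23
  · intro p q
    fin_cases p <;> fin_cases q <;>
      first
      | exact iff_of_true h01 (by decide) | exact iff_of_true h12 (by decide)
      | exact iff_of_true h23 (by decide) | exact iff_of_true h30 (by decide)
      | exact iff_of_true h01.symm (by decide) | exact iff_of_true h12.symm (by decide)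
      | exact iff_of_true h23.symm (by decide) | exact iff_of_true h30.symm (by decide)
      | exact iff_of_false G.irrefl (by decide)
      | exact iff_of_false h02 (by decide) | exact iff_of_false h13 (by decide)
      | exact iff_of_false (fun h => h02 h.symm) (by decide)
      | exact iff_of_false (fun h => h13 h.symm) (by decide)

theorem stmt_3 {V : Type*} [Fintype V] (G : SimpleGraph V)
    (hC4 : _root_.Free G (cycleGraph 4)) (hP6 : _root_.Free G (pathGraph 6))
    (v : ZMod 5 → V) (hv : IsInducedC5 G v) (i : ZMod 5)
    (x : V) (hx : x ∈ cycS G v {i - 2, i + 2}) :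
    AntiCompleteTo G {x} (cycS G v {i - 2, i - 1, i}) ∨
      AntiCompleteTo G {x} (cycS G v {i, i + 1, i + 2}) := by
  by_contra hcon
  rw [not_or] at hcon
  obtain ⟨h1, h2⟩ := hcon
  unfold AntiCompleteTo at h1 h2
  push_neg at h1 h2
  obtain ⟨x', hx', a, ha, hxa⟩ := h1
  obtain ⟨x'', hx'', b, hb, hxb⟩ := h2
  rw [Set.mem_singleton_iff] at hx' hx''
  rw [hx'] at hxa
  rw [hx''] at hxb
  clear hx' hx''
  obtain ⟨hxV, hxN⟩ := hx
  obtain ⟨haV, haN⟩ := ha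
  obtain ⟨hbV, hbN⟩ := hb
  obtain ⟨hvinj, hvadj⟩ := hv
  -- adjacency facts
  have hxv2 : G.Adj x (v (i + 2)) := (hxN (i + 2)).2 (by right; rfl)
  have hxv2' : G.Adj x (v (i - 2)) := (hxN (i - 2)).2 (by left; rfl)
  have hav2 : G.Adj a (v (i - 2)) := (haN (i - 2)).2 (by left; rfl)
  have havi : G.Adj a (v i) := (haN i).2 (by right; right; rfl)
  have hbvi : G.Adj b (v i) := (hbN i).2 (by left; rfl)
  have hbv2 : G.Adj b (v (i + 2)) := (hbN (i + 2)).2 (by right; right; rfl)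
  -- non-adjacency facts
  have hnav2 : ¬ G.Adj a (v (i + 2)) := by
    rw [haN (i + 2)]
    have : ∀ i : ZMod 5, ¬ (i + 2 = i - 2 ∨ i + 2 = i - 1 ∨ i + 2 = i) := by decide
    exact this i
  have hnbv2 : ¬ G.Adj b (v (i - 2)) := by
    rw [hbN (i - 2)]
    have : ∀ i : ZMod 5, ¬ (i - 2 = i ∨ i - 2 = i + 1 ∨ i - 2 = i + 2) := by decide
    exact this i
  have hnxvi : ¬ G.Adj x (v i) := by
    rw [hxN i]
    have : ∀ i : ZMod 5, ¬ (i = i - 2 ∨ i = i + 2) := by decide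
    exact this i
  have hv22 : G.Adj (v (i + 2)) (v (i - 2)) := by
    rw [hvadj]
    left
    have : ∀ i : ZMod 5, i - 2 = (i + 2) + 1 := by decide
    exact this i
  -- distinctness
  have hxa' : x ≠ a := fun h => hnav2 (h ▸ hxv2)
  have hxb' : x ≠ b := fun h => hnbv2 (h ▸ hxv2')
  have hab' : a ≠ b := fun h => hnbv2 (h ▸ hav2)
  have h2525 : v (i - 2) ≠ v (i + 2) := by
    intro h
    have := hvinj h
    have h5 : ∀ i : ZMod 5, i - 2 ≠ i + 2 := by decide
    exact h5 i this
  by_cases hadj : G.Adj a b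
  · -- induced C4 on v(i-2), a, b, v(i+2)
    exact (c4_of G (v (i - 2)) a b (v (i + 2))
      hav2.symm hadj hbv2 hv22
      (fun h => hnbv2 h.symm) hnav2
      (fun h => haV _ h.symm) (fun h => hbV _ h.symm) h2525
      hab' (haV (i + 2)) (hbV (i + 2))).elim hC4.false
  · -- induced C4 on x, a, v i, b
    exact (c4_of G x a (v i) b
      hxa havi hbvi.symm hxb.symm
      hnxvi hadj
      hxa' (hxV i) hxb'
      (fun h => haV _ h) (fun h => hab' h) (fun h => hbV _ h.symm)).elim hC4.false
end

section
/- Let G be a finite simple graph that is (C4,P6)-free and contains an induced 5-cycle C = v1v2v3v4v5, and let i ∈ {1,...,5} (indices modulo 5). Then every vertex of S(i-1,i-2,i+2) ∪ S(i+1,i+2,i-2) is either complete or anti-complete to the vertex set of each connected component of the subgraph of G induced by S(i-2,i+2). -/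
set_option maxHeartbeats 1000000


open SimpleGraph

lemma p6_of {V : Type*} (G : SimpleGraph V) (hP6 : _root_.Free G (pathGraph 6))
    (y x s p q r : V)
    (hyx : G.Adj y x) (hxs : G.Adj x s) (hsp : G.Adj s p) (hpq : G.Adj p q) (hqr : G.Adj q r)
    (hys : ¬G.Adj y s) (hyp : ¬G.Adj y p) (hyq : ¬G.Adj y q) (hyr : ¬G.Adj y r)
    (hxp : ¬G.Adj x p) (hxq : ¬G.Adj x q) (hxr : ¬G.Adj x r)
    (hsq : ¬G.Adj s q) (hsr : ¬G.Adj s r)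
    (hpr : ¬G.Adj p r) : False := by
  have nys : y ≠ s := fun h => hyp (h ▸ hsp)
  have nyp : y ≠ p := fun h => hxp (h ▸ hyx.symm)
  have nyq : y ≠ q := fun h => hyp (h ▸ hpq.symm)
  have nyr : y ≠ r := fun h => hyq (h ▸ hqr.symm)
  have nxp : x ≠ p := fun h => hxq (h ▸ hpq)
  have nxq : x ≠ q := fun h => hxr (h ▸ hqr)
  have nxr : x ≠ r := fun h => hxq (h ▸ hqr.symm)
  have nsq : s ≠ q := fun h => hsr (h ▸ hqr)
  have nsr : s ≠ r := fun h => hsq (h ▸ hqr.symm)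
  have npr : p ≠ r := fun h => hsr (h ▸ hsp)
  have nyx := hyx.ne
  have nxs := hxs.ne
  have nsp := hsp.ne
  have npq := hpq.ne
  have nqr := hqr.ne
  refine hP6.false ⟨⟨![y,x,s,p,q,r], ?_⟩, ?_⟩
  · intro a b hab
    fin_cases a <;> fin_cases b <;>
      first
        | rfl
        | exact absurd hab (by assumption)
        | exact absurd hab.symm (by assumption)
  · intro a b
    fin_cases a <;> fin_cases b <;>
      simp only [pathGraph_adj] <;>
      norm_num <;>
      first
        | exact fun h => G.irrefl h
        | assumption
        | exact (by assumption : G.Adj _ _).symm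
        | exact fun h => (by assumption : ¬ G.Adj _ _) h.symm

theorem stmt_4 {V : Type*} [Fintype V] (G : SimpleGraph V)
    (hC4 : _root_.Free G (cycleGraph 4)) (hP6 : _root_.Free G (pathGraph 6))
    (v : ZMod 5 → V) (hv : IsInducedC5 G v) (i : ZMod 5)
    (s : V) (hs : s ∈ cycS G v {i - 1, i - 2, i + 2} ∪ cycS G v {i + 1, i + 2, i - 2})
    (c : (G.induce (cycS G v {i - 2, i + 2})).ConnectedComponent) :
    CompleteTo G {s} (Subtype.val '' c.supp) ∨
      AntiCompleteTo G {s} (Subtype.val '' c.supp) := by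
  classical
  have e1 : i - 1 = i + 4 := by
    have h4 : (4 : ZMod 5) = -1 := by decide
    rw [h4, ← sub_eq_add_neg]
  have e2 : i - 2 = i + 3 := by
    have h3 : (3 : ZMod 5) = -2 := by decide
    rw [h3, ← sub_eq_add_neg]
  have cyc : ∀ cc d : ZMod 5, G.Adj (v (i+cc)) (v (i+d)) ↔ (d = cc + 1 ∨ cc = d + 1) := by
    intro cc d
    rw [hv.2]
    simp [add_assoc, add_right_inj]
  have Sadj : ∀ z ∈ (cycS G v {i - 2, i + 2}), ∀ cc : ZMod 5, G.Adj z (v (i+cc)) ↔ (cc = 3 ∨ cc = 2) := by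
    intro z hz cc
    rw [hz.2, e2]
    simp [Set.mem_insert_iff, add_right_inj]
  have key : ∀ x y : V, x ∈ (cycS G v {i - 2, i + 2}) → y ∈ (cycS G v {i - 2, i + 2}) → G.Adj x y → G.Adj s x → G.Adj s y := by
    intro x y hx hy hxy hsx
    by_contra hsy
    have xadj := Sadj x hx
    have yadj := Sadj y hy
    rcases hs with hs1 | hs1
    · have sadj : ∀ cc : ZMod 5, G.Adj s (v (i+cc)) ↔ (cc = 4 ∨ cc = 3 ∨ cc = 2) := by
        intro cc
        rw [hs1.2, e1, e2]
        simp [Set.mem_insert_iff, add_right_inj]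
      exact p6_of G hP6 y x s (v (i+4)) (v (i+0)) (v (i+1))
        hxy.symm hsx.symm
        ((sadj 4).2 (Or.inl rfl))
        ((cyc 4 0).2 (Or.inl (by decide)))
        ((cyc 0 1).2 (Or.inl (by decide)))
        (fun h => hsy h.symm)
        (fun h => by have := (yadj 4).1 h; revert this; decide)
        (fun h => by have := (yadj 0).1 h; revert this; decide)
        (fun h => by have := (yadj 1).1 h; revert this; decide)
        (fun h => by have := (xadj 4).1 h; revert this; decide)
        (fun h => by have := (xadj 0).1 h; revert this; decide)
        (fun h => by have := (xadj 1).1 h; revert this; decide)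
        (fun h => by have := (sadj 0).1 h; revert this; decide)
        (fun h => by have := (sadj 1).1 h; revert this; decide)
        (fun h => by have := (cyc 4 1).1 h; revert this; decide)
    · have sadj : ∀ cc : ZMod 5, G.Adj s (v (i+cc)) ↔ (cc = 1 ∨ cc = 2 ∨ cc = 3) := by
        intro cc
        rw [hs1.2, e2]
        simp [Set.mem_insert_iff, add_right_inj]
      exact p6_of G hP6 y x s (v (i+1)) (v (i+0)) (v (i+4))
        hxy.symm hsx.symm
        ((sadj 1).2 (Or.inl rfl))
        ((cyc 1 0).2 (Or.inr (by decide)))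
        ((cyc 0 4).2 (Or.inr (by decide)))
        (fun h => hsy h.symm)
        (fun h => by have := (yadj 1).1 h; revert this; decide)
        (fun h => by have := (yadj 0).1 h; revert this; decide)
        (fun h => by have := (yadj 4).1 h; revert this; decide)
        (fun h => by have := (xadj 1).1 h; revert this; decide)
        (fun h => by have := (xadj 0).1 h; revert this; decide)
        (fun h => by have := (xadj 4).1 h; revert this; decide)
        (fun h => by have := (sadj 0).1 h; revert this; decide)
        (fun h => by have := (sadj 4).1 h; revert this; decide)
        (fun h => by have := (cyc 1 4).1 h; revert this; decide)
  have reach : ∀ z w : ↥(cycS G v {i - 2, i + 2}), (G.induce (cycS G v {i - 2, i + 2})).Reachable z w → G.Adj s ↑z → G.Adj s ↑w := by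
    intro z w h
    obtain ⟨p⟩ := h
    induction p with
    | nil => exact id
    | cons ha p ih =>
        intro hz
        exact ih (key _ _ (Subtype.prop _) (Subtype.prop _) ha hz)
  by_cases hex : ∃ z ∈ c.supp, G.Adj s ↑z
  · left
    obtain ⟨z, hzc, hz⟩ := hex
    intro a ha b hb
    obtain ⟨w, hwc, rfl⟩ := hb
    have ha' : a = s := ha
    subst ha'
    have hr : (G.induce (cycS G v {i - 2, i + 2})).Reachable z w :=
      ConnectedComponent.exact
        ((c.mem_supp_iff z).1 hzc |>.trans ((c.mem_supp_iff w).1 hwc).symm)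
    exact reach z w hr hz
  · right
    intro a ha b hb hadj
    obtain ⟨w, hwc, rfl⟩ := hb
    have ha' : a = s := ha
    subst ha'
    exact hex ⟨w, hwc, hadj⟩
end

section
/- Let G be a finite simple graph that is (C4,P6)-free and contains an induced 5-cycle C = v1v2v3v4v5, and let i ∈ {1,...,5} (indices modulo 5). If both S(i-1,i-2) and S(i+1,i+2) are nonempty, then every vertex of S(i-1,i,i+1) is either complete or anti-complete to S(i-1,i-2) ∪ S(i+1,i+2). -/
open SimpleGraph

set_option maxRecDepth 4000

lemma c4aux {V : Type*} (G : SimpleGraph V) (hC4 : _root_.Free G (cycleGraph 4))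
    (a b c d : V) (hac : a ≠ c) (hbd : b ≠ d)
    (hab : G.Adj a b) (hbc : G.Adj b c) (hcd : G.Adj c d) (hda : G.Adj d a)
    (nac : ¬ G.Adj a c) (nbd : ¬ G.Adj b d) : False := by
  have hba := hab.symm; have hcb := hbc.symm; have hdc := hcd.symm; have had := hda.symm
  have nca : ¬ G.Adj c a := fun h => nac h.symm
  have ndb : ¬ G.Adj d b := fun h => nbd h.symm
  have hca := hac.symm; have hdb := hbd.symm
  apply hC4.false
  refine ⟨⟨![a,b,c,d], ?_⟩, ?_⟩
  · intro x y hxy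
    fin_cases x <;> fin_cases y <;> simp_all
  · intro x y
    show G.Adj (![a,b,c,d] x) (![a,b,c,d] y) ↔ (cycleGraph 4).Adj x y
    fin_cases x <;> fin_cases y <;> simp_all [cycleGraph_adj, Fin.ext_iff] <;> decide

lemma p6aux {V : Type*} (G : SimpleGraph V) (hP6 : _root_.Free G (pathGraph 6))
    (x0 x1 x2 x3 x4 x5 : V)
    (h01 : G.Adj x0 x1) (h12 : G.Adj x1 x2) (h23 : G.Adj x2 x3)
    (h34 : G.Adj x3 x4) (h45 : G.Adj x4 x5)
    (n02 : ¬ G.Adj x0 x2) (n03 : ¬ G.Adj x0 x3) (n04 : ¬ G.Adj x0 x4) (n05 : ¬ G.Adj x0 x5)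
    (n13 : ¬ G.Adj x1 x3) (n14 : ¬ G.Adj x1 x4) (n15 : ¬ G.Adj x1 x5)
    (n24 : ¬ G.Adj x2 x4) (n25 : ¬ G.Adj x2 x5) (n35 : ¬ G.Adj x3 x5)
    (e02 : x0 ≠ x2) (e03 : x0 ≠ x3) (e04 : x0 ≠ x4) (e05 : x0 ≠ x5)
    (e13 : x1 ≠ x3) (e14 : x1 ≠ x4) (e15 : x1 ≠ x5)
    (e24 : x2 ≠ x4) (e25 : x2 ≠ x5) (e35 : x3 ≠ x5) : False := by
  have h10 := h01.symm; have h21 := h12.symm; have h32 := h23.symm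
  have h43 := h34.symm; have h54 := h45.symm
  have n20 : ¬ G.Adj x2 x0 := fun h => n02 h.symm
  have n30 : ¬ G.Adj x3 x0 := fun h => n03 h.symm
  have n40 : ¬ G.Adj x4 x0 := fun h => n04 h.symm
  have n50 : ¬ G.Adj x5 x0 := fun h => n05 h.symm
  have n31 : ¬ G.Adj x3 x1 := fun h => n13 h.symm
  have n41 : ¬ G.Adj x4 x1 := fun h => n14 h.symm
  have n51 : ¬ G.Adj x5 x1 := fun h => n15 h.symm
  have n42 : ¬ G.Adj x4 x2 := fun h => n24 h.symm
  have n52 : ¬ G.Adj x5 x2 := fun h => n25 h.symm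
  have n53 : ¬ G.Adj x5 x3 := fun h => n35 h.symm
  apply hP6.false
  refine ⟨⟨![x0,x1,x2,x3,x4,x5], ?_⟩, ?_⟩
  · intro x y hxy
    fin_cases x <;> fin_cases y <;> (try rfl) <;> simp [Matrix.cons_val_succ] at hxy <;>
      first
        | exact absurd hxy h01.ne
        | exact absurd hxy.symm h01.ne
        | exact absurd hxy h12.ne
        | exact absurd hxy.symm h12.ne
        | exact absurd hxy h23.ne
        | exact absurd hxy.symm h23.ne
        | exact absurd hxy h34.ne
        | exact absurd hxy.symm h34.ne
        | exact absurd hxy h45.ne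
        | exact absurd hxy.symm h45.ne
        | exact absurd hxy e02
        | exact absurd hxy.symm e02
        | exact absurd hxy e03
        | exact absurd hxy.symm e03
        | exact absurd hxy e04
        | exact absurd hxy.symm e04
        | exact absurd hxy e05
        | exact absurd hxy.symm e05
        | exact absurd hxy e13
        | exact absurd hxy.symm e13
        | exact absurd hxy e14
        | exact absurd hxy.symm e14
        | exact absurd hxy e15
        | exact absurd hxy.symm e15
        | exact absurd hxy e24
        | exact absurd hxy.symm e24
        | exact absurd hxy e25
        | exact absurd hxy.symm e25
        | exact absurd hxy e35
        | exact absurd hxy.symm e35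
  · intro x y
    show G.Adj _ _ ↔ (pathGraph 6).Adj x y
    fin_cases x <;> fin_cases y <;>
      simp [pathGraph_adj, Matrix.cons_val_succ, show ((3:Fin 6)).val = 3 from rfl,
        show ((4:Fin 6)).val = 4 from rfl, show ((5:Fin 6)).val = 5 from rfl,
        show ((2:Fin 6)).val = 2 from rfl, show ((1:Fin 6)).val = 1 from rfl,
        show ((0:Fin 6)).val = 0 from rfl] <;>
      first | assumption | exact G.irrefl _

theorem stmt_5 {V : Type*} [Fintype V] (G : SimpleGraph V)
    (hC4 : _root_.Free G (cycleGraph 4)) (hP6 : _root_.Free G (pathGraph 6))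
    (v : ZMod 5 → V) (hv : IsInducedC5 G v) (i : ZMod 5)
    (h1 : (cycS G v {i - 1, i - 2}).Nonempty) (h2 : (cycS G v {i + 1, i + 2}).Nonempty)
    (s : V) (hs : s ∈ cycS G v {i - 1, i, i + 1}) :
    CompleteTo G {s} (cycS G v {i - 1, i - 2} ∪ cycS G v {i + 1, i + 2}) ∨
      AntiCompleteTo G {s} (cycS G v {i - 1, i - 2} ∪ cycS G v {i + 1, i + 2}) := by
  have e1 : i - 1 = i + 4 := by
    rw [sub_eq_add_neg]; exact congrArg (i + ·) (by decide)
  have e2 : i - 2 = i + 3 := by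
    rw [sub_eq_add_neg]; exact congrArg (i + ·) (by decide)
  -- basic cycle facts in offset form
  have hvne : ∀ {a b : ZMod 5}, a ≠ b → v (i + a) ≠ v (i + b) := by
    intro a b h hh
    exact h (add_left_cancel (hv.1 hh))
  have adjV : ∀ a b : ZMod 5, G.Adj (v (i + a)) (v (i + b)) ↔ (b = a + 1 ∨ a = b + 1) := by
    intro a b
    rw [hv.2]
    simp only [add_assoc, add_right_inj]
  -- neighbourhood descriptions in offset form
  have memA : ∀ x ∈ cycS G v {i - 1, i - 2},
      (∀ j, x ≠ v j) ∧ ∀ c : ZMod 5, (G.Adj x (v (i + c)) ↔ (c = 4 ∨ c = 3)) := by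
    rintro x ⟨hx1, hx2⟩
    refine ⟨hx1, fun c => ?_⟩
    rw [hx2, e1, e2]
    simp only [Set.mem_insert_iff, Set.mem_singleton_iff, add_right_inj]
  have memB : ∀ x ∈ cycS G v {i + 1, i + 2},
      (∀ j, x ≠ v j) ∧ ∀ c : ZMod 5, (G.Adj x (v (i + c)) ↔ (c = 1 ∨ c = 2)) := by
    rintro x ⟨hx1, hx2⟩
    refine ⟨hx1, fun c => ?_⟩
    rw [hx2]
    simp only [Set.mem_insert_iff, Set.mem_singleton_iff, add_right_inj]
  obtain ⟨hs1, hs2⟩ := hs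
  have hsAdj : ∀ c : ZMod 5, G.Adj s (v (i + c)) ↔ (c = 4 ∨ c = 0 ∨ c = 1) := by
    intro c
    rw [hs2, e1]
    simp only [Set.mem_insert_iff, Set.mem_singleton_iff, add_right_inj, add_eq_left]
  -- A is anticomplete to B
  have AB : ∀ a ∈ cycS G v {i - 1, i - 2}, ∀ b ∈ cycS G v {i + 1, i + 2}, ¬ G.Adj a b := by
    intro a ha b hb hab
    obtain ⟨ha1, ha2⟩ := memA a ha
    obtain ⟨hb1, hb2⟩ := memB b hb
    refine c4aux G hC4 a b (v (i + 2)) (v (i + 3)) (ha1 _) (hb1 _) hab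
      ((hb2 2).mpr (by decide)) ((adjV 2 3).mpr (by decide))
      (((ha2 3).mpr (by decide)).symm)
      (fun h => by have := (ha2 2).mp h; revert this; decide)
      (fun h => by have := (hb2 3).mp h; revert this; decide)
  -- the key equivalence
  have key : ∀ a ∈ cycS G v {i - 1, i - 2}, ∀ b ∈ cycS G v {i + 1, i + 2},
      (G.Adj s a ↔ G.Adj s b) := by
    intro a ha b hb
    obtain ⟨ha1, ha2⟩ := memA a ha
    obtain ⟨hb1, hb2⟩ := memB b hb
    have nab : ¬ G.Adj a b := AB a ha b hb
    have eab : a ≠ b := by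
      intro h
      have := (hb2 4).mp (h ▸ (ha2 4).mpr (by decide))
      revert this; decide
    have esa : s ≠ a := by
      intro h
      have := (ha2 0).mp (h ▸ (hsAdj 0).mpr (by decide))
      revert this; decide
    have esb : s ≠ b := by
      intro h
      have := (hb2 0).mp (h ▸ (hsAdj 0).mpr (by decide))
      revert this; decide
    constructor
    · intro hsa
      by_contra hsb
      -- induced P6 : v(i) - s - a - v(i+3) - v(i+2) - b
      refine p6aux G hP6 (v (i + 0)) s a (v (i + 3)) (v (i + 2)) b
        (((hsAdj 0).mpr (by decide)).symm) hsa ((ha2 3).mpr (by decide))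
        ((adjV 3 2).mpr (by decide)) (((hb2 2).mpr (by decide)).symm)
        (fun h => by have := (ha2 0).mp h.symm; revert this; decide)
        (fun h => by have := (adjV 0 3).mp h; revert this; decide)
        (fun h => by have := (adjV 0 2).mp h; revert this; decide)
        (fun h => by have := (hb2 0).mp h.symm; revert this; decide)
        (fun h => by have := (hsAdj 3).mp h; revert this; decide)
        (fun h => by have := (hsAdj 2).mp h; revert this; decide)
        hsb
        (fun h => by have := (ha2 2).mp h; revert this; decide)
        nab
        (fun h => by have := (hb2 3).mp h.symm; revert this; decide)
        (fun h => ha1 _ h.symm) (hvne (by decide)) (hvne (by decide))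
        (fun h => hb1 _ h.symm) (hs1 _) (hs1 _) esb (ha1 _) eab (fun h => hb1 _ h.symm)
    · intro hsb
      by_contra hsa
      -- induced P6 : v(i) - s - b - v(i+2) - v(i+3) - a
      refine p6aux G hP6 (v (i + 0)) s b (v (i + 2)) (v (i + 3)) a
        (((hsAdj 0).mpr (by decide)).symm) hsb ((hb2 2).mpr (by decide))
        ((adjV 2 3).mpr (by decide)) (((ha2 3).mpr (by decide)).symm)
        (fun h => by have := (hb2 0).mp h.symm; revert this; decide)
        (fun h => by have := (adjV 0 2).mp h; revert this; decide)
        (fun h => by have := (adjV 0 3).mp h; revert this; decide)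
        (fun h => by have := (ha2 0).mp h.symm; revert this; decide)
        (fun h => by have := (hsAdj 2).mp h; revert this; decide)
        (fun h => by have := (hsAdj 3).mp h; revert this; decide)
        hsa
        (fun h => by have := (hb2 3).mp h; revert this; decide)
        (fun h => nab h.symm)
        (fun h => by have := (ha2 2).mp h.symm; revert this; decide)
        (fun h => hb1 _ h.symm) (hvne (by decide)) (hvne (by decide))
        (fun h => ha1 _ h.symm) (hs1 _) (hs1 _) esa (hb1 _) (fun h => eab h.symm)
        (fun h => ha1 _ h.symm)
  obtain ⟨a0, ha0⟩ := h1
  obtain ⟨b0, hb0⟩ := h2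
  by_cases h : G.Adj s a0
  · left
    rintro x rfl y hy
    rcases hy with hyA | hyB
    · exact (key y hyA b0 hb0).mpr ((key a0 ha0 b0 hb0).mp h)
    · exact (key a0 ha0 y hyB).mp h
  · right
    rintro x rfl y hy hadj
    rcases hy with hyA | hyB
    · exact h ((key a0 ha0 b0 hb0).mpr ((key y hyA b0 hb0).mp hadj))
    · exact h ((key a0 ha0 y hyB).mpr hadj)
end

section
/- Let G be a finite simple (C4,C6,F1,F2,P6)-free strong atom containing an induced 5-cycle, and let C = v1v2v3v4v5 be an induced 5-cycle of G such that |S_5(C)| is maximum over all induced 5-cycles of G and, subject to that, |S_3(C)| is minimum. Then for each i ∈ {1,...,5} (indices modulo 5), S(i) is anti-complete to S(i-2,i-1,i) ∪ S(i,i+1,i+2). -/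
open SimpleGraph

/-- `K` is a clique cutset of `G`: a clique whose removal increases the number of
connected components. -/
def IsCliqueCutset {V : Type*} (G : SimpleGraph V) (K : Set V) : Prop :=
  G.IsClique K ∧
    Nat.card G.ConnectedComponent < Nat.card (G.induce Kᶜ).ConnectedComponent

/-- An atom is a graph with no clique cutset. -/
def IsGraphAtom {V : Type*} (G : SimpleGraph V) : Prop :=
  ∀ K : Set V, ¬ IsCliqueCutset G K

/-- A strong atom: an atom with no universal vertex and no pair of (true) twins. -/
def IsStrongAtom {V : Type*} (G : SimpleGraph V) : Prop :=
  IsGraphAtom G ∧ (∀ u : V, ¬ ∀ w, w ≠ u → G.Adj u w) ∧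
    ∀ u w : V, G.Adj u w → ¬ ∀ z, z ≠ u → z ≠ w → (G.Adj z u ↔ G.Adj z w)

/-- The graph `F₁` of the paper: vertices `0,…,4` are `v₁,…,v₅` (a 5-cycle), `5 = x`,
`6 = y`, `7 = z`; edges: the 5-cycle, `yv₂, yv₃, zv₄, zv₅, xv₃, xv₄, xy, xz`. -/
def F1 : SimpleGraph (Fin 8) :=
  SimpleGraph.fromRel (fun a b => (a, b) ∈
    [((0 : Fin 8), (1 : Fin 8)), (1, 2), (2, 3), (3, 4), (4, 0),
     (6, 1), (6, 2), (7, 3), (7, 4), (5, 2), (5, 3), (5, 6), (5, 7)])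

/-- The graph `F₂` of the paper: vertices `0,…,4` are `v₁,…,v₅` (a 5-cycle), `5 = t`,
`6 = x`, `7 = y`; edges: the 5-cycle, `yv₂, yv₃, xv₄, xv₅, tv₅, tv₁, tv₂, tx, ty`. -/
def F2 : SimpleGraph (Fin 8) :=
  SimpleGraph.fromRel (fun a b => (a, b) ∈
    [((0 : Fin 8), (1 : Fin 8)), (1, 2), (2, 3), (3, 4), (4, 0),
     (7, 1), (7, 2), (6, 3), (6, 4), (5, 4), (5, 0), (5, 1), (5, 6), (5, 7)])

/-- The underlying 5-cycle `v₁,…,v₅` (as a map `ZMod 5 → V`, with `v 0 = v₅`) of an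
(induced) copy of `F₁` or `F₂` given by a vertex map `f : Fin 8 → V`. -/
def underlyingC5 {V : Type*} (f : Fin 8 → V) : ZMod 5 → V :=
  fun i => f ⟨(i - 1).val, by have := ZMod.val_lt (i - 1); omega⟩


instance F1.adjDecidable : DecidableRel F1.Adj :=
  fun a b => decidable_of_iff _ (SimpleGraph.fromRel_adj _ a b).symm
instance F2.adjDecidable : DecidableRel F2.Adj :=
  fun a b => decidable_of_iff _ (SimpleGraph.fromRel_adj _ a b).symm
instance pathGraph.adjDecidable (n : ℕ) : DecidableRel (pathGraph n).Adj :=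
  fun a b => decidable_of_iff _ (pathGraph_adj).symm

theorem zmod5_cases (P : ZMod 5 → Prop) (h0 : P 0) (h1 : P 1) (h2 : P 2) (h3 : P 3)
    (h4 : P 4) : ∀ i, P i := by
  intro i
  fin_cases i
  · exact h0
  · exact h1
  · exact h2
  · exact h3
  · exact h4

theorem no_ind {V : Type*} {G : SimpleGraph V} {n : ℕ} {H : SimpleGraph (Fin n)}
    (hf : _root_.Free G H) (f : Fin n → V)
    (h1 : ∀ i j, H.Adj i j → G.Adj (f i) (f j))
    (h2 : ∀ i j, i ≠ j → ¬H.Adj i j → ¬G.Adj (f i) (f j))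
    (h3 : ∀ i j, i ≠ j → f i ≠ f j) : False := by
  apply hf.false
  refine ⟨⟨f, ?_⟩, ?_⟩
  · intro i j hij
    by_contra hne
    exact h3 i j hne hij
  · intro i j
    constructor
    · intro hadj
      by_contra hH
      rcases eq_or_ne i j with rfl | hne
      · exact G.irrefl hadj
      · exact h2 i j hne hH hadj
    · exact h1 i j
theorem noC4x {V : Type*} {G : SimpleGraph V} (hf : _root_.Free G (cycleGraph 4))
    (a0 a1 a2 a3 : V)
    (h01 : G.Adj a0 a1) (h12 : G.Adj a1 a2) (h23 : G.Adj a2 a3) (h03 : G.Adj a0 a3)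
    (n02 : ¬G.Adj a0 a2) (n13 : ¬G.Adj a1 a3)
    (e02 : a0 ≠ a2) (e13 : a1 ≠ a3) : False := by
  refine no_ind hf ![a0,a1,a2,a3] ?_ ?_ ?_
  · intro i j h
    fin_cases i <;> fin_cases j <;>
      first
        | exact absurd h (by decide)
        | exact h01 | exact h12 | exact h23 | exact h03 | exact h01.symm | exact h12.symm | exact h23.symm | exact h03.symm
  · intro i j hne h
    fin_cases i <;> fin_cases j <;>
      first
        | exact absurd rfl hne
        | exact absurd (by decide) h
        | exact n02 | exact n13 | exact fun h' => n02 h'.symm | exact fun h' => n13 h'.symm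
  · intro i j hne
    fin_cases i <;> fin_cases j <;>
      first
        | exact absurd rfl hne
        | exact h01.ne | exact h12.ne | exact h23.ne | exact h03.ne | exact h01.ne.symm | exact h12.ne.symm | exact h23.ne.symm | exact h03.ne.symm | exact e02 | exact e13 | exact e02.symm | exact e13.symm

theorem noC6x {V : Type*} {G : SimpleGraph V} (hf : _root_.Free G (cycleGraph 6))
    (a0 a1 a2 a3 a4 a5 : V)
    (h01 : G.Adj a0 a1) (h12 : G.Adj a1 a2) (h23 : G.Adj a2 a3) (h34 : G.Adj a3 a4) (h45 : G.Adj a4 a5) (h05 : G.Adj a0 a5)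
    (n02 : ¬G.Adj a0 a2) (n03 : ¬G.Adj a0 a3) (n04 : ¬G.Adj a0 a4) (n13 : ¬G.Adj a1 a3) (n14 : ¬G.Adj a1 a4) (n15 : ¬G.Adj a1 a5) (n24 : ¬G.Adj a2 a4) (n25 : ¬G.Adj a2 a5) (n35 : ¬G.Adj a3 a5)
    (e02 : a0 ≠ a2) (e03 : a0 ≠ a3) (e04 : a0 ≠ a4) (e13 : a1 ≠ a3) (e14 : a1 ≠ a4) (e15 : a1 ≠ a5) (e24 : a2 ≠ a4) (e25 : a2 ≠ a5) (e35 : a3 ≠ a5) : False := by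
  refine no_ind hf ![a0,a1,a2,a3,a4,a5] ?_ ?_ ?_
  · intro i j h
    fin_cases i <;> fin_cases j <;>
      first
        | exact absurd h (by decide)
        | exact h01 | exact h12 | exact h23 | exact h34 | exact h45 | exact h05 | exact h01.symm | exact h12.symm | exact h23.symm | exact h34.symm | exact h45.symm | exact h05.symm
  · intro i j hne h
    fin_cases i <;> fin_cases j <;>
      first
        | exact absurd rfl hne
        | exact absurd (by decide) h
        | exact n02 | exact n03 | exact n04 | exact n13 | exact n14 | exact n15 | exact n24 | exact n25 | exact n35 | exact fun h' => n02 h'.symm | exact fun h' => n03 h'.symm | exact fun h' => n04 h'.symm | exact fun h' => n13 h'.symm | exact fun h' => n14 h'.symm | exact fun h' => n15 h'.symm | exact fun h' => n24 h'.symm | exact fun h' => n25 h'.symm | exact fun h' => n35 h'.symm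
  · intro i j hne
    fin_cases i <;> fin_cases j <;>
      first
        | exact absurd rfl hne
        | exact h01.ne | exact h12.ne | exact h23.ne | exact h34.ne | exact h45.ne | exact h05.ne | exact h01.ne.symm | exact h12.ne.symm | exact h23.ne.symm | exact h34.ne.symm | exact h45.ne.symm | exact h05.ne.symm | exact e02 | exact e03 | exact e04 | exact e13 | exact e14 | exact e15 | exact e24 | exact e25 | exact e35 | exact e02.symm | exact e03.symm | exact e04.symm | exact e13.symm | exact e14.symm | exact e15.symm | exact e24.symm | exact e25.symm | exact e35.symm

theorem noP6x {V : Type*} {G : SimpleGraph V} (hf : _root_.Free G (pathGraph 6))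
    (a0 a1 a2 a3 a4 a5 : V)
    (h01 : G.Adj a0 a1) (h12 : G.Adj a1 a2) (h23 : G.Adj a2 a3) (h34 : G.Adj a3 a4) (h45 : G.Adj a4 a5)
    (n02 : ¬G.Adj a0 a2) (n03 : ¬G.Adj a0 a3) (n04 : ¬G.Adj a0 a4) (n05 : ¬G.Adj a0 a5) (n13 : ¬G.Adj a1 a3) (n14 : ¬G.Adj a1 a4) (n15 : ¬G.Adj a1 a5) (n24 : ¬G.Adj a2 a4) (n25 : ¬G.Adj a2 a5) (n35 : ¬G.Adj a3 a5)
    (e02 : a0 ≠ a2) (e03 : a0 ≠ a3) (e04 : a0 ≠ a4) (e05 : a0 ≠ a5) (e13 : a1 ≠ a3) (e14 : a1 ≠ a4) (e15 : a1 ≠ a5) (e24 : a2 ≠ a4) (e25 : a2 ≠ a5) (e35 : a3 ≠ a5) : False := by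
  refine no_ind hf ![a0,a1,a2,a3,a4,a5] ?_ ?_ ?_
  · intro i j h
    fin_cases i <;> fin_cases j <;>
      first
        | exact absurd h (by decide)
        | exact h01 | exact h12 | exact h23 | exact h34 | exact h45 | exact h01.symm | exact h12.symm | exact h23.symm | exact h34.symm | exact h45.symm
  · intro i j hne h
    fin_cases i <;> fin_cases j <;>
      first
        | exact absurd rfl hne
        | exact absurd (by decide) h
        | exact n02 | exact n03 | exact n04 | exact n05 | exact n13 | exact n14 | exact n15 | exact n24 | exact n25 | exact n35 | exact fun h' => n02 h'.symm | exact fun h' => n03 h'.symm | exact fun h' => n04 h'.symm | exact fun h' => n05 h'.symm | exact fun h' => n13 h'.symm | exact fun h' => n14 h'.symm | exact fun h' => n15 h'.symm | exact fun h' => n24 h'.symm | exact fun h' => n25 h'.symm | exact fun h' => n35 h'.symm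
  · intro i j hne
    fin_cases i <;> fin_cases j <;>
      first
        | exact absurd rfl hne
        | exact h01.ne | exact h12.ne | exact h23.ne | exact h34.ne | exact h45.ne | exact h01.ne.symm | exact h12.ne.symm | exact h23.ne.symm | exact h34.ne.symm | exact h45.ne.symm | exact e02 | exact e03 | exact e04 | exact e05 | exact e13 | exact e14 | exact e15 | exact e24 | exact e25 | exact e35 | exact e02.symm | exact e03.symm | exact e04.symm | exact e05.symm | exact e13.symm | exact e14.symm | exact e15.symm | exact e24.symm | exact e25.symm | exact e35.symm

theorem noF1x {V : Type*} {G : SimpleGraph V} (hf : _root_.Free G F1)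
    (q0 q1 q2 q3 q4 x y z : V)
    (h01 : G.Adj q0 q1) (h12 : G.Adj q1 q2) (h23 : G.Adj q2 q3) (h34 : G.Adj q3 q4) (h04 : G.Adj q0 q4) (h16 : G.Adj q1 y) (h26 : G.Adj q2 y) (h37 : G.Adj q3 z) (h47 : G.Adj q4 z) (h25 : G.Adj q2 x) (h35 : G.Adj q3 x) (h56 : G.Adj x y) (h57 : G.Adj x z)
    (n02 : ¬G.Adj q0 q2) (n03 : ¬G.Adj q0 q3) (n05 : ¬G.Adj q0 x) (n06 : ¬G.Adj q0 y) (n07 : ¬G.Adj q0 z) (n13 : ¬G.Adj q1 q3) (n14 : ¬G.Adj q1 q4) (n15 : ¬G.Adj q1 x) (n17 : ¬G.Adj q1 z) (n24 : ¬G.Adj q2 q4) (n27 : ¬G.Adj q2 z) (n36 : ¬G.Adj q3 y) (n45 : ¬G.Adj q4 x) (n46 : ¬G.Adj q4 y) (n67 : ¬G.Adj y z)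
    (e02 : q0 ≠ q2) (e03 : q0 ≠ q3) (e05 : q0 ≠ x) (e06 : q0 ≠ y) (e07 : q0 ≠ z) (e13 : q1 ≠ q3) (e14 : q1 ≠ q4) (e15 : q1 ≠ x) (e17 : q1 ≠ z) (e24 : q2 ≠ q4) (e27 : q2 ≠ z) (e36 : q3 ≠ y) (e45 : q4 ≠ x) (e46 : q4 ≠ y) (e67 : y ≠ z) : False := by
  refine no_ind hf ![q0,q1,q2,q3,q4,x,y,z] ?_ ?_ ?_
  · intro i j h
    fin_cases i <;> fin_cases j <;>
      first
        | exact absurd h (by decide)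
        | exact h01 | exact h12 | exact h23 | exact h34 | exact h04 | exact h16 | exact h26 | exact h37 | exact h47 | exact h25 | exact h35 | exact h56 | exact h57 | exact h01.symm | exact h12.symm | exact h23.symm | exact h34.symm | exact h04.symm | exact h16.symm | exact h26.symm | exact h37.symm | exact h47.symm | exact h25.symm | exact h35.symm | exact h56.symm | exact h57.symm
  · intro i j hne h
    fin_cases i <;> fin_cases j <;>
      first
        | exact absurd rfl hne
        | exact absurd (by decide) h
        | exact n02 | exact n03 | exact n05 | exact n06 | exact n07 | exact n13 | exact n14 | exact n15 | exact n17 | exact n24 | exact n27 | exact n36 | exact n45 | exact n46 | exact n67 | exact fun h' => n02 h'.symm | exact fun h' => n03 h'.symm | exact fun h' => n05 h'.symm | exact fun h' => n06 h'.symm | exact fun h' => n07 h'.symm | exact fun h' => n13 h'.symm | exact fun h' => n14 h'.symm | exact fun h' => n15 h'.symm | exact fun h' => n17 h'.symm | exact fun h' => n24 h'.symm | exact fun h' => n27 h'.symm | exact fun h' => n36 h'.symm | exact fun h' => n45 h'.symm | exact fun h' => n46 h'.symm | exact fun h' => n67 h'.symm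
  · intro i j hne
    fin_cases i <;> fin_cases j <;>
      first
        | exact absurd rfl hne
        | exact h01.ne | exact h12.ne | exact h23.ne | exact h34.ne | exact h04.ne | exact h16.ne | exact h26.ne | exact h37.ne | exact h47.ne | exact h25.ne | exact h35.ne | exact h56.ne | exact h57.ne | exact h01.ne.symm | exact h12.ne.symm | exact h23.ne.symm | exact h34.ne.symm | exact h04.ne.symm | exact h16.ne.symm | exact h26.ne.symm | exact h37.ne.symm | exact h47.ne.symm | exact h25.ne.symm | exact h35.ne.symm | exact h56.ne.symm | exact h57.ne.symm | exact e02 | exact e03 | exact e05 | exact e06 | exact e07 | exact e13 | exact e14 | exact e15 | exact e17 | exact e24 | exact e27 | exact e36 | exact e45 | exact e46 | exact e67 | exact e02.symm | exact e03.symm | exact e05.symm | exact e06.symm | exact e07.symm | exact e13.symm | exact e14.symm | exact e15.symm | exact e17.symm | exact e24.symm | exact e27.symm | exact e36.symm | exact e45.symm | exact e46.symm | exact e67.symm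

theorem noF2x {V : Type*} {G : SimpleGraph V} (hf : _root_.Free G F2)
    (q0 q1 q2 q3 q4 t x y : V)
    (h01 : G.Adj q0 q1) (h12 : G.Adj q1 q2) (h23 : G.Adj q2 q3) (h34 : G.Adj q3 q4) (h04 : G.Adj q0 q4) (h17 : G.Adj q1 y) (h27 : G.Adj q2 y) (h36 : G.Adj q3 x) (h46 : G.Adj q4 x) (h45 : G.Adj q4 t) (h05 : G.Adj q0 t) (h15 : G.Adj q1 t) (h56 : G.Adj t x) (h57 : G.Adj t y)
    (n02 : ¬G.Adj q0 q2) (n03 : ¬G.Adj q0 q3) (n06 : ¬G.Adj q0 x) (n07 : ¬G.Adj q0 y) (n13 : ¬G.Adj q1 q3) (n14 : ¬G.Adj q1 q4) (n16 : ¬G.Adj q1 x) (n24 : ¬G.Adj q2 q4) (n25 : ¬G.Adj q2 t) (n26 : ¬G.Adj q2 x) (n35 : ¬G.Adj q3 t) (n37 : ¬G.Adj q3 y) (n47 : ¬G.Adj q4 y) (n67 : ¬G.Adj x y)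
    (e02 : q0 ≠ q2) (e03 : q0 ≠ q3) (e06 : q0 ≠ x) (e07 : q0 ≠ y) (e13 : q1 ≠ q3) (e14 : q1 ≠ q4) (e16 : q1 ≠ x) (e24 : q2 ≠ q4) (e25 : q2 ≠ t) (e26 : q2 ≠ x) (e35 : q3 ≠ t) (e37 : q3 ≠ y) (e47 : q4 ≠ y) (e67 : x ≠ y) : False := by
  refine no_ind hf ![q0,q1,q2,q3,q4,t,x,y] ?_ ?_ ?_
  · intro i j h
    fin_cases i <;> fin_cases j <;>
      first
        | exact absurd h (by decide)
        | exact h01 | exact h12 | exact h23 | exact h34 | exact h04 | exact h17 | exact h27 | exact h36 | exact h46 | exact h45 | exact h05 | exact h15 | exact h56 | exact h57 | exact h01.symm | exact h12.symm | exact h23.symm | exact h34.symm | exact h04.symm | exact h17.symm | exact h27.symm | exact h36.symm | exact h46.symm | exact h45.symm | exact h05.symm | exact h15.symm | exact h56.symm | exact h57.symm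
  · intro i j hne h
    fin_cases i <;> fin_cases j <;>
      first
        | exact absurd rfl hne
        | exact absurd (by decide) h
        | exact n02 | exact n03 | exact n06 | exact n07 | exact n13 | exact n14 | exact n16 | exact n24 | exact n25 | exact n26 | exact n35 | exact n37 | exact n47 | exact n67 | exact fun h' => n02 h'.symm | exact fun h' => n03 h'.symm | exact fun h' => n06 h'.symm | exact fun h' => n07 h'.symm | exact fun h' => n13 h'.symm | exact fun h' => n14 h'.symm | exact fun h' => n16 h'.symm | exact fun h' => n24 h'.symm | exact fun h' => n25 h'.symm | exact fun h' => n26 h'.symm | exact fun h' => n35 h'.symm | exact fun h' => n37 h'.symm | exact fun h' => n47 h'.symm | exact fun h' => n67 h'.symm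
  · intro i j hne
    fin_cases i <;> fin_cases j <;>
      first
        | exact absurd rfl hne
        | exact h01.ne | exact h12.ne | exact h23.ne | exact h34.ne | exact h04.ne | exact h17.ne | exact h27.ne | exact h36.ne | exact h46.ne | exact h45.ne | exact h05.ne | exact h15.ne | exact h56.ne | exact h57.ne | exact h01.ne.symm | exact h12.ne.symm | exact h23.ne.symm | exact h34.ne.symm | exact h04.ne.symm | exact h17.ne.symm | exact h27.ne.symm | exact h36.ne.symm | exact h46.ne.symm | exact h45.ne.symm | exact h05.ne.symm | exact h15.ne.symm | exact h56.ne.symm | exact h57.ne.symm | exact e02 | exact e03 | exact e06 | exact e07 | exact e13 | exact e14 | exact e16 | exact e24 | exact e25 | exact e26 | exact e35 | exact e37 | exact e47 | exact e67 | exact e02.symm | exact e03.symm | exact e06.symm | exact e07.symm | exact e13.symm | exact e14.symm | exact e16.symm | exact e24.symm | exact e25.symm | exact e26.symm | exact e35.symm | exact e37.symm | exact e47.symm | exact e67.symm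

theorem cutset_contra {V : Type*} [Fintype V] {G : SimpleGraph V} (hat : IsGraphAtom G)
    (K : Set V) (hcl : G.IsClique K) (x y : V) (hx : x ∉ K) (hy : y ∉ K)
    (hreach : G.Reachable x y)
    (hnreach : ¬ (G.induce Kᶜ).Reachable ⟨x, hx⟩ ⟨y, hy⟩)
    (hKadj : ∀ k ∈ K, ∃ w, w ∉ K ∧ G.Adj k w) : False := by
  classical
  set H := G.induce Kᶜ with hH
  let hom : H →g G := ⟨Subtype.val, fun {p q} h => h⟩
  let f : H.ConnectedComponent → G.ConnectedComponent := ConnectedComponent.map hom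
  have hsurj : Function.Surjective f := by
    intro c
    induction c using ConnectedComponent.ind with
    | _ t =>
      by_cases ht : t ∈ K
      · obtain ⟨w, hwK, hadj⟩ := hKadj t ht
        exact ⟨H.connectedComponentMk ⟨w, hwK⟩, (ConnectedComponent.sound hadj.symm.reachable)⟩
      · exact ⟨H.connectedComponentMk ⟨t, ht⟩, rfl⟩
  have hninj : ¬ Function.Injective f := by
    intro hinj
    have h1 : f (H.connectedComponentMk ⟨x, hx⟩) = f (H.connectedComponentMk ⟨y, hy⟩) :=
      ConnectedComponent.sound hreach
    exact hnreach (ConnectedComponent.exact (hinj h1))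
  have hle : Nat.card G.ConnectedComponent ≤ Nat.card H.ConnectedComponent :=
    Nat.card_le_card_of_surjective f hsurj
  have hnlt := hat K
  rw [IsCliqueCutset] at hnlt
  push_neg at hnlt
  have hle2 := hnlt hcl
  have heq : Nat.card H.ConnectedComponent = Nat.card G.ConnectedComponent := le_antisymm hle2 hle
  have hbij : Function.Bijective f := (Nat.bijective_iff_surjective_and_card f).mpr ⟨hsurj, heq⟩
  exact hninj hbij.injective

theorem core {V : Type*} [Fintype V] (G : SimpleGraph V)
    (hC4 : _root_.Free G (cycleGraph 4)) (hC6 : _root_.Free G (cycleGraph 6))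
    (hF1 : _root_.Free G F1) (hF2 : _root_.Free G F2) (hP6 : _root_.Free G (pathGraph 6))
    (hsa : IsStrongAtom G)
    (v : ZMod 5 → V) (hv : IsInducedC5 G v)
    (hmax5 : ∀ w : ZMod 5 → V, IsInducedC5 G w →
      (cycSdeg G w 5).ncard ≤ (cycSdeg G v 5).ncard)
    (a b : V) (ha : a ∈ cycS G v {0}) (hb : b ∈ cycS G v {(0 : ZMod 5), 1, 2})
    (hab : G.Adj a b) : False := by
  classical
  -- adjacency on the cycle, cleaned up
  have ham : ∀ i : ZMod 5, G.Adj a (v i) ↔ i = 0 := by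
    intro i; rw [ha.2 i]; simp
  have hbm : ∀ i : ZMod 5, G.Adj b (v i) ↔ (i = 0 ∨ i = 1 ∨ i = 2) := by
    intro i; rw [hb.2 i]; simp
  have hbc : ∀ i, b ≠ v i := hb.1
  have hb0 : G.Adj b (v 0) := (hbm 0).mpr (by decide)
  have hb1 : G.Adj b (v 1) := (hbm 1).mpr (by decide)
  have hb2 : G.Adj b (v 2) := (hbm 2).mpr (by decide)
  have hbn3 : ¬G.Adj b (v 3) := fun h => by have := (hbm 3).mp h; revert this; decide
  have hbn4 : ¬G.Adj b (v 4) := fun h => by have := (hbm 4).mp h; revert this; decide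
  have hcard5 : (Set.univ : Set (ZMod 5)).ncard = 5 := by
    rw [Set.ncard_univ]; simp [Nat.card_eq_fintype_card]
  -- the `P`, `Y`, `X`, `S5` classes
  set PP : V → Prop := fun u =>
    (∀ i, u ≠ v i) ∧ (∀ i, G.Adj u (v i) ↔ i = 0) ∧ G.Adj u b with hPP
  set SY : V → Prop := fun u =>
    (∀ i, u ≠ v i) ∧ (∀ i, G.Adj u (v i) ↔ (i = 0 ∨ i = 1 ∨ i = 2)) ∧
      (∃ z, PP z ∧ G.Adj u z) with hSY
  set SX : V → Prop := fun u =>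
    (∀ i, u ≠ v i) ∧ (∀ i, G.Adj u (v i) ↔ (i = 4 ∨ i = 0 ∨ i = 1)) ∧ G.Adj u b ∧
      (∃ z, PP z ∧ G.Adj u z) with hSX
  set S5 : V → Prop := fun u => (∀ i, u ≠ v i) ∧ (∀ i, G.Adj u (v i)) with hS5
  set K : Set V := {u | u = v 0 ∨ u = b ∨ S5 u ∨ SY u ∨ SX u} with hK
  have hPa : PP a := ⟨ha.1, ham, hab⟩
  -- membership of S_5(C) gives full adjacency
  have hS5full : ∀ u, u ∈ cycSdeg G v 5 → S5 u := by
    intro u hu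
    refine ⟨hu.1, ?_⟩
    have huniv : {i : ZMod 5 | G.Adj u (v i)} = Set.univ := by
      apply Set.eq_of_subset_of_ncard_le (Set.subset_univ _)
      rw [hu.2, hcard5]
    intro i
    exact (Set.eq_univ_iff_forall.mp huniv) i
  -- every S_5 vertex is adjacent to b
  have hS5b : ∀ u, S5 u → G.Adj u b := by
    intro u hu
    by_contra hne
    exact noC4x hC4 u (v 0) b (v 2) (hu.2 0) hb0.symm hb2 (hu.2 2)
      hne (fun h => absurd ((hv.2 0 2).mp h) (by decide))
      (fun he => hbn3 (he ▸ hu.2 3)) (hv.1.ne (by decide))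
  -- ===== the S5-growth contradiction killing type-B neighbours =====
  have Bkill : ∀ z x, PP z → (∀ i, x ≠ v i) → G.Adj x (v 2) → G.Adj x (v 3) →
      ¬G.Adj x (v 0) → ¬G.Adj x (v 1) → ¬G.Adj x (v 4) → G.Adj x b → G.Adj z x → False := by
    intro z x hz hxc hx2 hx3 hxn0 hxn1 hxn4 hxb hzx
    have hzc : ∀ i, z ≠ v i := hz.1
    have hz0 : G.Adj z (v 0) := (hz.2.1 0).mpr rfl
    have hzn1 : ¬G.Adj z (v 1) := fun h => by have := (hz.2.1 1).mp h; revert this; decide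
    have hzn2 : ¬G.Adj z (v 2) := fun h => by have := (hz.2.1 2).mp h; revert this; decide
    have hzn3 : ¬G.Adj z (v 3) := fun h => by have := (hz.2.1 3).mp h; revert this; decide
    have hzn4 : ¬G.Adj z (v 4) := fun h => by have := (hz.2.1 4).mp h; revert this; decide
    have hzb : G.Adj z b := hz.2.2
    set W : ZMod 5 → V := ![z, x, v 2, v 1, v 0] with hWdef
    have hW0 : W 0 = z := rfl
    have hW1 : W 1 = x := rfl
    have hW2 : W 2 = v 2 := rfl
    have hW3 : W 3 = v 1 := rfl
    have hW4 : W 4 = v 0 := rfl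
    have hWc5 : IsInducedC5 G W := by
      constructor
      · show Function.Injective W
        have : ∀ i j : ZMod 5, W i = W j → i = j := by
          refine zmod5_cases _ ?_ ?_ ?_ ?_ ?_ <;> refine zmod5_cases _ ?_ ?_ ?_ ?_ ?_ <;> intro hij <;>
          first
            | rfl
            | exact absurd hij hzx.ne
            | exact absurd hij hzx.ne.symm
            | exact absurd hij (hzc 2) | exact absurd hij (hzc 1) | exact absurd hij (hzc 0)
            | exact absurd hij (hzc 2).symm | exact absurd hij (hzc 1).symm
            | exact absurd hij (hzc 0).symm
            | exact absurd hij (hxc 2) | exact absurd hij (hxc 1) | exact absurd hij (hxc 0)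
            | exact absurd hij (hxc 2).symm | exact absurd hij (hxc 1).symm
            | exact absurd hij (hxc 0).symm
            | exact absurd hij (hv.1.ne (by decide))
        exact fun {i j} => this i j
      · refine zmod5_cases _ ?_ ?_ ?_ ?_ ?_ <;> refine zmod5_cases _ ?_ ?_ ?_ ?_ ?_ <;>
          first
            | exact iff_of_false (fun h => G.irrefl h) (by decide)
            | exact iff_of_true hzx (by decide)
            | exact iff_of_true hzx.symm (by decide)
            | exact iff_of_true hx2 (by decide)
            | exact iff_of_true hx2.symm (by decide)
            | exact iff_of_true ((hv.2 2 1).mpr (by decide)) (by decide)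
            | exact iff_of_true ((hv.2 1 2).mpr (by decide)) (by decide)
            | exact iff_of_true ((hv.2 1 0).mpr (by decide)) (by decide)
            | exact iff_of_true ((hv.2 0 1).mpr (by decide)) (by decide)
            | exact iff_of_true hz0.symm (by decide)
            | exact iff_of_true hz0 (by decide)
            | exact iff_of_false hzn2 (by decide)
            | exact iff_of_false (fun h => hzn2 h.symm) (by decide)
            | exact iff_of_false hzn1 (by decide)
            | exact iff_of_false (fun h => hzn1 h.symm) (by decide)
            | exact iff_of_false hxn1 (by decide)
            | exact iff_of_false (fun h => hxn1 h.symm) (by decide)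
            | exact iff_of_false hxn0 (by decide)
            | exact iff_of_false (fun h => hxn0 h.symm) (by decide)
            | exact iff_of_false (fun h => absurd ((hv.2 2 0).mp h) (by decide)) (by decide)
            | exact iff_of_false (fun h => absurd ((hv.2 0 2).mp h) (by decide)) (by decide)
    have hsub : insert b (cycSdeg G v 5) ⊆ cycSdeg G W 5 := by
      intro u hu
      rcases Set.mem_insert_iff.mp hu with hub | hu5
      · rw [hub]
        refine ⟨?_, ?_⟩
        · exact zmod5_cases _ (fun he => hzn1 ((show b = z from he) ▸ hb1))
            (fun he => hbn3 ((show b = x from he) ▸ hx3)) (hbc 2) (hbc 1) (hbc 0)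
        · have huniv : {j : ZMod 5 | G.Adj b (W j)} = Set.univ :=
            Set.eq_univ_of_forall (zmod5_cases _ hzb.symm hxb.symm hb2 hb1 hb0)
          rw [huniv, hcard5]
      · have hu1 := hu5.1
        have hfull : ∀ i, G.Adj u (v i) := (hS5full u hu5).2
        have hub : G.Adj u b := hS5b u (hS5full u hu5)
        have hux : G.Adj u x := by
          by_contra hne
          exact noC4x hC4 u b x (v 3) hub hxb.symm hx3 (hfull 3)
            hne hbn3 (fun he => hxn0 (he ▸ hfull 0)) (hbc 3)
        have huz : G.Adj u z := by
          by_contra hne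
          exact noC4x hC4 u (v 0) z x (hfull 0) hz0.symm hzx hux
            hne (fun h => hxn0 h.symm) (fun he => hzn1 (he ▸ hfull 1)) (hxc 0).symm
        refine ⟨?_, ?_⟩
        · exact zmod5_cases _ huz.ne hux.ne (hu1 2) (hu1 1) (hu1 0)
        · have huniv : {j : ZMod 5 | G.Adj u (W j)} = Set.univ :=
            Set.eq_univ_of_forall (zmod5_cases _ huz hux (hfull 2) (hfull 1) (hfull 0))
          rw [huniv, hcard5]
    have hbnot : b ∉ cycSdeg G v 5 := by
      intro hmem
      exact hbn3 ((hS5full b hmem).2 3)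
    have h1 : (insert b (cycSdeg G v 5)).ncard ≤ (cycSdeg G W 5).ncard :=
      Set.ncard_le_ncard hsub (Set.toFinite _)
    have h2 : (cycSdeg G W 5).ncard ≤ (cycSdeg G v 5).ncard := hmax5 W hWc5
    rw [Set.ncard_insert_of_notMem hbnot (Set.toFinite _)] at h1
    omega
  -- ===== typing of neighbours of P-vertices =====
  have typing : ∀ z w, PP z → G.Adj z w → (w ∈ K ∨ PP w) := by
    intro z w hz hzw
    have hzc : ∀ i, z ≠ v i := hz.1
    have hz0 : G.Adj z (v 0) := (hz.2.1 0).mpr rfl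
    have hzn1 : ¬G.Adj z (v 1) := fun h => by have := (hz.2.1 1).mp h; revert this; decide
    have hzn2 : ¬G.Adj z (v 2) := fun h => by have := (hz.2.1 2).mp h; revert this; decide
    have hzn3 : ¬G.Adj z (v 3) := fun h => by have := (hz.2.1 3).mp h; revert this; decide
    have hzn4 : ¬G.Adj z (v 4) := fun h => by have := (hz.2.1 4).mp h; revert this; decide
    have hzb : G.Adj z b := hz.2.2
    have hzbne : z ≠ b := fun he => hzn1 (he ▸ hb1)
    by_cases hwv0 : w = v 0
    · exact Or.inl (Or.inl hwv0)
    have hwc : ∀ i, w ≠ v i :=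
      zmod5_cases _ hwv0 (fun he => hzn1 (he ▸ hzw)) (fun he => hzn2 (he ▸ hzw))
        (fun he => hzn3 (he ▸ hzw)) (fun he => hzn4 (he ▸ hzw))
    by_cases hwb : G.Adj w b
    · by_cases hw0 : G.Adj w (v 0)
      · by_cases hw1 : G.Adj w (v 1)
        · by_cases hw2 : G.Adj w (v 2)
          · by_cases hw3 : G.Adj w (v 3)
            · by_cases hw4 : G.Adj w (v 4)
              · exact Or.inl (Or.inr (Or.inr (Or.inl ⟨hwc, zmod5_cases _ hw0 hw1 hw2 hw3 hw4⟩)))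
              · exact (noC4x hC4 (v 0) (v 4) (v 3) w ((hv.2 0 4).mpr (by decide)) ((hv.2 4 3).mpr (by decide)) hw3.symm hw0.symm (fun hh => absurd ((hv.2 0 3).mp hh) (by decide)) (fun hh => hw4 hh.symm) (hv.1.ne (show (0:ZMod 5) ≠ 3 by decide)) (hwc 4).symm).elim
            · by_cases hw4 : G.Adj w (v 4)
              · exact (noC4x hC4 (v 2) (v 3) (v 4) w ((hv.2 2 3).mpr (by decide)) ((hv.2 3 4).mpr (by decide)) hw4.symm hw2.symm (fun hh => absurd ((hv.2 2 4).mp hh) (by decide)) (fun hh => hw3 hh.symm) (hv.1.ne (show (2:ZMod 5) ≠ 4 by decide)) (hwc 3).symm).elim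
              · refine Or.inl (Or.inr (Or.inr (Or.inr (Or.inl ⟨hwc, ?_, ⟨z, hz, hzw.symm⟩⟩))))
                refine zmod5_cases _ ?_ ?_ ?_ ?_ ?_
                · exact iff_of_true hw0 (by decide)
                · exact iff_of_true hw1 (by decide)
                · exact iff_of_true hw2 (by decide)
                · exact iff_of_false hw3 (by decide)
                · exact iff_of_false hw4 (by decide)
          · by_cases hw3 : G.Adj w (v 3)
            · by_cases hw4 : G.Adj w (v 4)
              · exact (noC4x hC4 (v 1) (v 2) (v 3) w ((hv.2 1 2).mpr (by decide)) ((hv.2 2 3).mpr (by decide)) hw3.symm hw1.symm (fun hh => absurd ((hv.2 1 3).mp hh) (by decide)) (fun hh => hw2 hh.symm) (hv.1.ne (show (1:ZMod 5) ≠ 3 by decide)) (hwc 2).symm).elim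
              · exact (noC4x hC4 (v 0) (v 4) (v 3) w ((hv.2 0 4).mpr (by decide)) ((hv.2 4 3).mpr (by decide)) hw3.symm hw0.symm (fun hh => absurd ((hv.2 0 3).mp hh) (by decide)) (fun hh => hw4 hh.symm) (hv.1.ne (show (0:ZMod 5) ≠ 3 by decide)) (hwc 4).symm).elim
            · by_cases hw4 : G.Adj w (v 4)
              · refine Or.inl (Or.inr (Or.inr (Or.inr (Or.inr ⟨hwc, ?_, hwb, ⟨z, hz, hzw.symm⟩⟩))))
                refine zmod5_cases _ ?_ ?_ ?_ ?_ ?_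
                · exact iff_of_true hw0 (by decide)
                · exact iff_of_true hw1 (by decide)
                · exact iff_of_false hw2 (by decide)
                · exact iff_of_false hw3 (by decide)
                · exact iff_of_true hw4 (by decide)
              · exact (noP6x hP6 (v 4) (v 3) (v 2) (v 1) w z ((hv.2 4 3).mpr (by decide)) ((hv.2 3 2).mpr (by decide)) ((hv.2 2 1).mpr (by decide)) hw1.symm hzw.symm (fun hh => (fun hh => absurd ((hv.2 2 4).mp hh) (by decide)) hh.symm) (fun hh => (fun hh => absurd ((hv.2 1 4).mp hh) (by decide)) hh.symm) (fun hh => hw4 hh.symm) (fun hh => hzn4 hh.symm) (fun hh => (fun hh => absurd ((hv.2 1 3).mp hh) (by decide)) hh.symm) (fun hh => hw3 hh.symm) (fun hh => hzn3 hh.symm) (fun hh => hw2 hh.symm) (fun hh => hzn2 hh.symm) (fun hh => hzn1 hh.symm) (hv.1.ne (show (2:ZMod 5) ≠ 4 by decide)).symm (hv.1.ne (show (1:ZMod 5) ≠ 4 by decide)).symm (hwc 4).symm (hzc 4).symm (hv.1.ne (show (1:ZMod 5) ≠ 3 by decide)).symm (hwc 3).symm (hzc 3).symm (hwc 2).symm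 (hzc 2).symm (hzc 1).symm).elim
        · by_cases hw2 : G.Adj w (v 2)
          · by_cases hw3 : G.Adj w (v 3)
            · by_cases hw4 : G.Adj w (v 4)
              · exact (noC4x hC4 (v 0) (v 1) (v 2) w ((hv.2 0 1).mpr (by decide)) ((hv.2 1 2).mpr (by decide)) hw2.symm hw0.symm (fun hh => absurd ((hv.2 0 2).mp hh) (by decide)) (fun hh => hw1 hh.symm) (hv.1.ne (show (0:ZMod 5) ≠ 2 by decide)) (hwc 1).symm).elim
              · exact (noC4x hC4 (v 0) (v 1) (v 2) w ((hv.2 0 1).mpr (by decide)) ((hv.2 1 2).mpr (by decide)) hw2.symm hw0.symm (fun hh => absurd ((hv.2 0 2).mp hh) (by decide)) (fun hh => hw1 hh.symm) (hv.1.ne (show (0:ZMod 5) ≠ 2 by decide)) (hwc 1).symm).elim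
            · by_cases hw4 : G.Adj w (v 4)
              · exact (noC4x hC4 (v 0) (v 1) (v 2) w ((hv.2 0 1).mpr (by decide)) ((hv.2 1 2).mpr (by decide)) hw2.symm hw0.symm (fun hh => absurd ((hv.2 0 2).mp hh) (by decide)) (fun hh => hw1 hh.symm) (hv.1.ne (show (0:ZMod 5) ≠ 2 by decide)) (hwc 1).symm).elim
              · exact (noC4x hC4 (v 0) (v 1) (v 2) w ((hv.2 0 1).mpr (by decide)) ((hv.2 1 2).mpr (by decide)) hw2.symm hw0.symm (fun hh => absurd ((hv.2 0 2).mp hh) (by decide)) (fun hh => hw1 hh.symm) (hv.1.ne (show (0:ZMod 5) ≠ 2 by decide)) (hwc 1).symm).elim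
          · by_cases hw3 : G.Adj w (v 3)
            · by_cases hw4 : G.Adj w (v 4)
              · exact (noC4x hC4 (v 2) (v 3) w b ((hv.2 2 3).mpr (by decide)) hw3.symm hwb hb2.symm (fun hh => hw2 hh.symm) (fun hh => hbn3 hh.symm) (hwc 2).symm (hbc 3).symm).elim
              · exact (noC4x hC4 (v 0) (v 4) (v 3) w ((hv.2 0 4).mpr (by decide)) ((hv.2 4 3).mpr (by decide)) hw3.symm hw0.symm (fun hh => absurd ((hv.2 0 3).mp hh) (by decide)) (fun hh => hw4 hh.symm) (hv.1.ne (show (0:ZMod 5) ≠ 3 by decide)) (hwc 4).symm).elim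
            · by_cases hw4 : G.Adj w (v 4)
              · exact (noP6x hP6 (v 1) (v 2) (v 3) (v 4) w z ((hv.2 1 2).mpr (by decide)) ((hv.2 2 3).mpr (by decide)) ((hv.2 3 4).mpr (by decide)) hw4.symm hzw.symm (fun hh => absurd ((hv.2 1 3).mp hh) (by decide)) (fun hh => absurd ((hv.2 1 4).mp hh) (by decide)) (fun hh => hw1 hh.symm) (fun hh => hzn1 hh.symm) (fun hh => absurd ((hv.2 2 4).mp hh) (by decide)) (fun hh => hw2 hh.symm) (fun hh => hzn2 hh.symm) (fun hh => hw3 hh.symm) (fun hh => hzn3 hh.symm) (fun hh => hzn4 hh.symm) (hv.1.ne (show (1:ZMod 5) ≠ 3 by decide)) (hv.1.ne (show (1:ZMod 5) ≠ 4 by decide)) (hwc 1).symm (hzc 1).symm (hv.1.ne (show (2:ZMod 5) ≠ 4 by decide)) (hwc 2).symm (hzc 2).symm (hwc 3).symm (hzc 3).symm (hzc 4).symm).elim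
              · refine Or.inr ⟨hwc, ?_, hwb⟩
                refine zmod5_cases _ ?_ ?_ ?_ ?_ ?_
                · exact iff_of_true hw0 (by decide)
                · exact iff_of_false hw1 (by decide)
                · exact iff_of_false hw2 (by decide)
                · exact iff_of_false hw3 (by decide)
                · exact iff_of_false hw4 (by decide)
      · by_cases hw1 : G.Adj w (v 1)
        · by_cases hw2 : G.Adj w (v 2)
          · by_cases hw3 : G.Adj w (v 3)
            · by_cases hw4 : G.Adj w (v 4)
              · exact (noC4x hC4 (v 0) (v 1) w (v 4) ((hv.2 0 1).mpr (by decide)) hw1.symm hw4 ((hv.2 0 4).mpr (by decide)) (fun hh => hw0 hh.symm) (fun hh => absurd ((hv.2 1 4).mp hh) (by decide)) (hwc 0).symm (hv.1.ne (show (1:ZMod 5) ≠ 4 by decide))).elim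
              · exact (noC4x hC4 (v 0) (v 1) w z ((hv.2 0 1).mpr (by decide)) hw1.symm hzw.symm hz0.symm (fun hh => hw0 hh.symm) (fun hh => hzn1 hh.symm) (hwc 0).symm (hzc 1).symm).elim
            · by_cases hw4 : G.Adj w (v 4)
              · exact (noC4x hC4 (v 0) (v 1) w (v 4) ((hv.2 0 1).mpr (by decide)) hw1.symm hw4 ((hv.2 0 4).mpr (by decide)) (fun hh => hw0 hh.symm) (fun hh => absurd ((hv.2 1 4).mp hh) (by decide)) (hwc 0).symm (hv.1.ne (show (1:ZMod 5) ≠ 4 by decide))).elim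
              · exact (noC4x hC4 (v 0) (v 1) w z ((hv.2 0 1).mpr (by decide)) hw1.symm hzw.symm hz0.symm (fun hh => hw0 hh.symm) (fun hh => hzn1 hh.symm) (hwc 0).symm (hzc 1).symm).elim
          · by_cases hw3 : G.Adj w (v 3)
            · by_cases hw4 : G.Adj w (v 4)
              · exact (noC4x hC4 (v 0) (v 1) w (v 4) ((hv.2 0 1).mpr (by decide)) hw1.symm hw4 ((hv.2 0 4).mpr (by decide)) (fun hh => hw0 hh.symm) (fun hh => absurd ((hv.2 1 4).mp hh) (by decide)) (hwc 0).symm (hv.1.ne (show (1:ZMod 5) ≠ 4 by decide))).elim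
              · exact (noC4x hC4 (v 0) (v 1) w z ((hv.2 0 1).mpr (by decide)) hw1.symm hzw.symm hz0.symm (fun hh => hw0 hh.symm) (fun hh => hzn1 hh.symm) (hwc 0).symm (hzc 1).symm).elim
            · by_cases hw4 : G.Adj w (v 4)
              · exact (noC4x hC4 (v 0) (v 1) w (v 4) ((hv.2 0 1).mpr (by decide)) hw1.symm hw4 ((hv.2 0 4).mpr (by decide)) (fun hh => hw0 hh.symm) (fun hh => absurd ((hv.2 1 4).mp hh) (by decide)) (hwc 0).symm (hv.1.ne (show (1:ZMod 5) ≠ 4 by decide))).elim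
              · exact (noC4x hC4 (v 0) (v 1) w z ((hv.2 0 1).mpr (by decide)) hw1.symm hzw.symm hz0.symm (fun hh => hw0 hh.symm) (fun hh => hzn1 hh.symm) (hwc 0).symm (hzc 1).symm).elim
        · by_cases hw2 : G.Adj w (v 2)
          · by_cases hw3 : G.Adj w (v 3)
            · by_cases hw4 : G.Adj w (v 4)
              · exact (noC4x hC4 (v 0) (v 4) w z ((hv.2 0 4).mpr (by decide)) hw4.symm hzw.symm hz0.symm (fun hh => hw0 hh.symm) (fun hh => hzn4 hh.symm) (hwc 0).symm (hzc 4).symm).elim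
              · exact (Bkill z w hz hwc hw2 hw3 hw0 hw1 hw4 hwb hzw).elim
            · by_cases hw4 : G.Adj w (v 4)
              · exact (noC4x hC4 (v 0) (v 4) w z ((hv.2 0 4).mpr (by decide)) hw4.symm hzw.symm hz0.symm (fun hh => hw0 hh.symm) (fun hh => hzn4 hh.symm) (hwc 0).symm (hzc 4).symm).elim
              · exact (noC6x hC6 (v 0) (v 4) (v 3) (v 2) w z ((hv.2 0 4).mpr (by decide)) ((hv.2 4 3).mpr (by decide)) ((hv.2 3 2).mpr (by decide)) hw2.symm hzw.symm hz0.symm (fun hh => absurd ((hv.2 0 3).mp hh) (by decide)) (fun hh => absurd ((hv.2 0 2).mp hh) (by decide)) (fun hh => hw0 hh.symm) (fun hh => (fun hh => absurd ((hv.2 2 4).mp hh) (by decide)) hh.symm) (fun hh => hw4 hh.symm) (fun hh => hzn4 hh.symm) (fun hh => hw3 hh.symm) (fun hh => hzn3 hh.symm) (fun hh => hzn2 hh.symm) (hv.1.ne (show (0:ZMod 5) ≠ 3 by decide)) (hv.1.ne (show (0:ZMod 5) ≠ 2 by decide)) (hwc 0).symm (hv.1.ne (show (2:ZMod 5) ≠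 4 by decide)).symm (hwc 4).symm (hzc 4).symm (hwc 3).symm (hzc 3).symm (hzc 2).symm).elim
          · by_cases hw3 : G.Adj w (v 3)
            · by_cases hw4 : G.Adj w (v 4)
              · exact (noC4x hC4 (v 0) (v 4) w z ((hv.2 0 4).mpr (by decide)) hw4.symm hzw.symm hz0.symm (fun hh => hw0 hh.symm) (fun hh => hzn4 hh.symm) (hwc 0).symm (hzc 4).symm).elim
              · exact (noC4x hC4 (v 2) (v 3) w b ((hv.2 2 3).mpr (by decide)) hw3.symm hwb hb2.symm (fun hh => hw2 hh.symm) (fun hh => hbn3 hh.symm) (hwc 2).symm (hbc 3).symm).elim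
            · by_cases hw4 : G.Adj w (v 4)
              · exact (noC4x hC4 (v 0) (v 4) w z ((hv.2 0 4).mpr (by decide)) hw4.symm hzw.symm hz0.symm (fun hh => hw0 hh.symm) (fun hh => hzn4 hh.symm) (hwc 0).symm (hzc 4).symm).elim
              · exact (noP6x hP6 (v 2) (v 3) (v 4) (v 0) z w ((hv.2 2 3).mpr (by decide)) ((hv.2 3 4).mpr (by decide)) ((hv.2 4 0).mpr (by decide)) hz0.symm hzw (fun hh => absurd ((hv.2 2 4).mp hh) (by decide)) (fun hh => (fun hh => absurd ((hv.2 0 2).mp hh) (by decide)) hh.symm) (fun hh => hzn2 hh.symm) (fun hh => hw2 hh.symm) (fun hh => (fun hh => absurd ((hv.2 0 3).mp hh) (by decide)) hh.symm) (fun hh => hzn3 hh.symm) (fun hh => hw3 hh.symm) (fun hh => hzn4 hh.symm) (fun hh => hw4 hh.symm) (fun hh => hw0 hh.symm) (hv.1.ne (show (2:ZMod 5) ≠ 4 by decide)) (hv.1.ne (show (0:ZMod 5) ≠ 2 by decide)).symm (hzc 2).symm (hwc 2).symm (hv.1.ne (show (0:ZMod 5) ≠ 3 by decide)).symm (hzc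 3).symm (hwc 3).symm (hzc 4).symm (hwc 4).symm (hwc 0).symm).elim
    · by_cases hw0 : G.Adj w (v 0)
      · by_cases hw1 : G.Adj w (v 1)
        · by_cases hw2 : G.Adj w (v 2)
          · by_cases hw3 : G.Adj w (v 3)
            · by_cases hw4 : G.Adj w (v 4)
              · exact Or.inl (Or.inr (Or.inr (Or.inl ⟨hwc, zmod5_cases _ hw0 hw1 hw2 hw3 hw4⟩)))
              · exact (noC4x hC4 (v 0) (v 4) (v 3) w ((hv.2 0 4).mpr (by decide)) ((hv.2 4 3).mpr (by decide)) hw3.symm hw0.symm (fun hh => absurd ((hv.2 0 3).mp hh) (by decide)) (fun hh => hw4 hh.symm) (hv.1.ne (show (0:ZMod 5) ≠ 3 by decide)) (hwc 4).symm).elim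
            · by_cases hw4 : G.Adj w (v 4)
              · exact (noC4x hC4 (v 0) b (v 2) w hb0.symm hb2 hw2.symm hw0.symm (fun hh => absurd ((hv.2 0 2).mp hh) (by decide)) (fun hh => hwb hh.symm) (hv.1.ne (show (0:ZMod 5) ≠ 2 by decide)) (show w ≠ b from (fun he => hbn4 (he ▸ hw4))).symm).elim
              · refine Or.inl (Or.inr (Or.inr (Or.inr (Or.inl ⟨hwc, ?_, ⟨z, hz, hzw.symm⟩⟩))))
                refine zmod5_cases _ ?_ ?_ ?_ ?_ ?_
                · exact iff_of_true hw0 (by decide)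
                · exact iff_of_true hw1 (by decide)
                · exact iff_of_true hw2 (by decide)
                · exact iff_of_false hw3 (by decide)
                · exact iff_of_false hw4 (by decide)
          · by_cases hw3 : G.Adj w (v 3)
            · by_cases hw4 : G.Adj w (v 4)
              · exact (noC4x hC4 (v 1) (v 2) (v 3) w ((hv.2 1 2).mpr (by decide)) ((hv.2 2 3).mpr (by decide)) hw3.symm hw1.symm (fun hh => absurd ((hv.2 1 3).mp hh) (by decide)) (fun hh => hw2 hh.symm) (hv.1.ne (show (1:ZMod 5) ≠ 3 by decide)) (hwc 2).symm).elim
              · exact (noC4x hC4 (v 0) (v 4) (v 3) w ((hv.2 0 4).mpr (by decide)) ((hv.2 4 3).mpr (by decide)) hw3.symm hw0.symm (fun hh => absurd ((hv.2 0 3).mp hh) (by decide)) (fun hh => hw4 hh.symm) (hv.1.ne (show (0:ZMod 5) ≠ 3 by decide)) (hwc 4).symm).elim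
            · by_cases hw4 : G.Adj w (v 4)
              · exact (noC4x hC4 (v 1) b z w hb1.symm hzb.symm hzw hw1.symm (fun hh => hzn1 hh.symm) (fun hh => hwb hh.symm) (hzc 1).symm (show w ≠ b from (fun he => hw2 (he.symm ▸ hb2))).symm).elim
              · exact (noC4x hC4 (v 1) b z w hb1.symm hzb.symm hzw hw1.symm (fun hh => hzn1 hh.symm) (fun hh => hwb hh.symm) (hzc 1).symm (show w ≠ b from (fun he => hw2 (he.symm ▸ hb2))).symm).elim
        · by_cases hw2 : G.Adj w (v 2)
          · by_cases hw3 : G.Adj w (v 3)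
            · by_cases hw4 : G.Adj w (v 4)
              · exact (noC4x hC4 (v 0) (v 1) (v 2) w ((hv.2 0 1).mpr (by decide)) ((hv.2 1 2).mpr (by decide)) hw2.symm hw0.symm (fun hh => absurd ((hv.2 0 2).mp hh) (by decide)) (fun hh => hw1 hh.symm) (hv.1.ne (show (0:ZMod 5) ≠ 2 by decide)) (hwc 1).symm).elim
              · exact (noC4x hC4 (v 0) (v 1) (v 2) w ((hv.2 0 1).mpr (by decide)) ((hv.2 1 2).mpr (by decide)) hw2.symm hw0.symm (fun hh => absurd ((hv.2 0 2).mp hh) (by decide)) (fun hh => hw1 hh.symm) (hv.1.ne (show (0:ZMod 5) ≠ 2 by decide)) (hwc 1).symm).elim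
            · by_cases hw4 : G.Adj w (v 4)
              · exact (noC4x hC4 (v 0) (v 1) (v 2) w ((hv.2 0 1).mpr (by decide)) ((hv.2 1 2).mpr (by decide)) hw2.symm hw0.symm (fun hh => absurd ((hv.2 0 2).mp hh) (by decide)) (fun hh => hw1 hh.symm) (hv.1.ne (show (0:ZMod 5) ≠ 2 by decide)) (hwc 1).symm).elim
              · exact (noC4x hC4 (v 0) (v 1) (v 2) w ((hv.2 0 1).mpr (by decide)) ((hv.2 1 2).mpr (by decide)) hw2.symm hw0.symm (fun hh => absurd ((hv.2 0 2).mp hh) (by decide)) (fun hh => hw1 hh.symm) (hv.1.ne (show (0:ZMod 5) ≠ 2 by decide)) (hwc 1).symm).elim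
          · by_cases hw3 : G.Adj w (v 3)
            · by_cases hw4 : G.Adj w (v 4)
              · exact (noF2x hF2 z b (v 2) (v 3) w (v 0) (v 4) (v 1) hzb hb2 ((hv.2 2 3).mpr (by decide)) hw3.symm hzw hb1 ((hv.2 2 1).mpr (by decide)) ((hv.2 3 4).mpr (by decide)) hw4 hw0 hz0 hb0 ((hv.2 0 4).mpr (by decide)) ((hv.2 0 1).mpr (by decide)) (fun hh => (fun hh => hzn2 hh.symm) hh.symm) (fun hh => (fun hh => hzn3 hh.symm) hh.symm) (fun hh => (fun hh => hzn4 hh.symm) hh.symm) (fun hh => (fun hh => hzn1 hh.symm) hh.symm) (fun hh => (fun hh => hbn3 hh.symm) hh.symm) (fun hh => hwb hh.symm) (fun hh => (fun hh => hbn4 hh.symm) hh.symm) (fun hh => hw2 hh.symm) (fun hh => (fun hh => absurd ((hv.2 0 2).mp hh) (by decide)) hh.symm) (fun hh => absurd ((hv.2 2 4).mp hh) (by decide)) (fun hh => (fun hh => absurd ((hv.2 0 3).mp hh) (by decide)) hh.symm) (fun hh => (fun hh => absurd ((hv.2 1 3).mp hh) (by decide)) hh.symm) (fun hh => (fun hh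 => hw1 hh.symm) hh.symm) (fun hh => (fun hh => absurd ((hv.2 1 4).mp hh) (by decide)) hh.symm) (hzc 2).symm.symm (hzc 3).symm.symm (hzc 4).symm.symm (hzc 1).symm.symm (hbc 3).symm.symm (show w ≠ b from (fun he => hw1 (he.symm ▸ hb1))).symm (hbc 4).symm.symm (hwc 2).symm (hv.1.ne (show (0:ZMod 5) ≠ 2 by decide)).symm (hv.1.ne (show (2:ZMod 5) ≠ 4 by decide)) (hv.1.ne (show (0:ZMod 5) ≠ 3 by decide)).symm (hv.1.ne (show (1:ZMod 5) ≠ 3 by decide)).symm (hwc 1).symm.symm (hv.1.ne (show (1:ZMod 5) ≠ 4 by decide)).symm).elim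
              · exact (noC4x hC4 (v 0) (v 4) (v 3) w ((hv.2 0 4).mpr (by decide)) ((hv.2 4 3).mpr (by decide)) hw3.symm hw0.symm (fun hh => absurd ((hv.2 0 3).mp hh) (by decide)) (fun hh => hw4 hh.symm) (hv.1.ne (show (0:ZMod 5) ≠ 3 by decide)) (hwc 4).symm).elim
            · by_cases hw4 : G.Adj w (v 4)
              · exact (noC6x hC6 (v 2) (v 3) (v 4) w z b ((hv.2 2 3).mpr (by decide)) ((hv.2 3 4).mpr (by decide)) hw4.symm hzw.symm hzb hb2.symm (fun hh => absurd ((hv.2 2 4).mp hh) (by decide)) (fun hh => hw2 hh.symm) (fun hh => hzn2 hh.symm) (fun hh => hw3 hh.symm) (fun hh => hzn3 hh.symm) (fun hh => hbn3 hh.symm) (fun hh => hzn4 hh.symm) (fun hh => hbn4 hh.symm) (fun hh => (fun hh => hwb hh.symm) hh.symm) (hv.1.ne (show (2:ZMod 5) ≠ 4 by decide)) (hwc 2).symm (hzc 2).symm (hwc 3).symm (hzc 3).symm (hbc 3).symm (hzc 4).symm (hbc 4).symm (fun he => hw1 (he.symm ▸ hb1))).elim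
              · exact (noP6x hP6 (v 4) (v 3) (v 2) b z w ((hv.2 4 3).mpr (by decide)) ((hv.2 3 2).mpr (by decide)) hb2.symm hzb.symm hzw (fun hh => (fun hh => absurd ((hv.2 2 4).mp hh) (by decide)) hh.symm) (fun hh => hbn4 hh.symm) (fun hh => hzn4 hh.symm) (fun hh => hw4 hh.symm) (fun hh => hbn3 hh.symm) (fun hh => hzn3 hh.symm) (fun hh => hw3 hh.symm) (fun hh => hzn2 hh.symm) (fun hh => hw2 hh.symm) (fun hh => hwb hh.symm) (hv.1.ne (show (2:ZMod 5) ≠ 4 by decide)).symm (hbc 4).symm (hzc 4).symm (hwc 4).symm (hbc 3).symm (hzc 3).symm (hwc 3).symm (hzc 2).symm (hwc 2).symm (show w ≠ b from (fun he => hw1 (he.symm ▸ hb1))).symm).elim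
      · by_cases hw1 : G.Adj w (v 1)
        · by_cases hw2 : G.Adj w (v 2)
          · by_cases hw3 : G.Adj w (v 3)
            · by_cases hw4 : G.Adj w (v 4)
              · exact (noC4x hC4 (v 0) (v 1) w (v 4) ((hv.2 0 1).mpr (by decide)) hw1.symm hw4 ((hv.2 0 4).mpr (by decide)) (fun hh => hw0 hh.symm) (fun hh => absurd ((hv.2 1 4).mp hh) (by decide)) (hwc 0).symm (hv.1.ne (show (1:ZMod 5) ≠ 4 by decide))).elim
              · exact (noC4x hC4 (v 0) (v 1) w z ((hv.2 0 1).mpr (by decide)) hw1.symm hzw.symm hz0.symm (fun hh => hw0 hh.symm) (fun hh => hzn1 hh.symm) (hwc 0).symm (hzc 1).symm).elim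
            · by_cases hw4 : G.Adj w (v 4)
              · exact (noC4x hC4 (v 0) (v 1) w (v 4) ((hv.2 0 1).mpr (by decide)) hw1.symm hw4 ((hv.2 0 4).mpr (by decide)) (fun hh => hw0 hh.symm) (fun hh => absurd ((hv.2 1 4).mp hh) (by decide)) (hwc 0).symm (hv.1.ne (show (1:ZMod 5) ≠ 4 by decide))).elim
              · exact (noC4x hC4 (v 0) (v 1) w z ((hv.2 0 1).mpr (by decide)) hw1.symm hzw.symm hz0.symm (fun hh => hw0 hh.symm) (fun hh => hzn1 hh.symm) (hwc 0).symm (hzc 1).symm).elim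
          · by_cases hw3 : G.Adj w (v 3)
            · by_cases hw4 : G.Adj w (v 4)
              · exact (noC4x hC4 (v 0) (v 1) w (v 4) ((hv.2 0 1).mpr (by decide)) hw1.symm hw4 ((hv.2 0 4).mpr (by decide)) (fun hh => hw0 hh.symm) (fun hh => absurd ((hv.2 1 4).mp hh) (by decide)) (hwc 0).symm (hv.1.ne (show (1:ZMod 5) ≠ 4 by decide))).elim
              · exact (noC4x hC4 (v 0) (v 1) w z ((hv.2 0 1).mpr (by decide)) hw1.symm hzw.symm hz0.symm (fun hh => hw0 hh.symm) (fun hh => hzn1 hh.symm) (hwc 0).symm (hzc 1).symm).elim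
            · by_cases hw4 : G.Adj w (v 4)
              · exact (noC4x hC4 (v 0) (v 1) w (v 4) ((hv.2 0 1).mpr (by decide)) hw1.symm hw4 ((hv.2 0 4).mpr (by decide)) (fun hh => hw0 hh.symm) (fun hh => absurd ((hv.2 1 4).mp hh) (by decide)) (hwc 0).symm (hv.1.ne (show (1:ZMod 5) ≠ 4 by decide))).elim
              · exact (noC4x hC4 (v 0) (v 1) w z ((hv.2 0 1).mpr (by decide)) hw1.symm hzw.symm hz0.symm (fun hh => hw0 hh.symm) (fun hh => hzn1 hh.symm) (hwc 0).symm (hzc 1).symm).elim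
        · by_cases hw2 : G.Adj w (v 2)
          · by_cases hw3 : G.Adj w (v 3)
            · by_cases hw4 : G.Adj w (v 4)
              · exact (noC4x hC4 (v 0) (v 4) w z ((hv.2 0 4).mpr (by decide)) hw4.symm hzw.symm hz0.symm (fun hh => hw0 hh.symm) (fun hh => hzn4 hh.symm) (hwc 0).symm (hzc 4).symm).elim
              · exact (noC4x hC4 (v 2) b z w hb2.symm hzb.symm hzw hw2.symm (fun hh => hzn2 hh.symm) (fun hh => hwb hh.symm) (hzc 2).symm (show w ≠ b from (fun he => hw0 (he.symm ▸ hb0))).symm).elim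
            · by_cases hw4 : G.Adj w (v 4)
              · exact (noC4x hC4 (v 0) (v 4) w z ((hv.2 0 4).mpr (by decide)) hw4.symm hzw.symm hz0.symm (fun hh => hw0 hh.symm) (fun hh => hzn4 hh.symm) (hwc 0).symm (hzc 4).symm).elim
              · exact (noC4x hC4 (v 2) b z w hb2.symm hzb.symm hzw hw2.symm (fun hh => hzn2 hh.symm) (fun hh => hwb hh.symm) (hzc 2).symm (show w ≠ b from (fun he => hw0 (he.symm ▸ hb0))).symm).elim
          · by_cases hw3 : G.Adj w (v 3)
            · by_cases hw4 : G.Adj w (v 4)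
              · exact (noC4x hC4 (v 0) (v 4) w z ((hv.2 0 4).mpr (by decide)) hw4.symm hzw.symm hz0.symm (fun hh => hw0 hh.symm) (fun hh => hzn4 hh.symm) (hwc 0).symm (hzc 4).symm).elim
              · exact (noC6x hC6 (v 0) (v 1) (v 2) (v 3) w z ((hv.2 0 1).mpr (by decide)) ((hv.2 1 2).mpr (by decide)) ((hv.2 2 3).mpr (by decide)) hw3.symm hzw.symm hz0.symm (fun hh => absurd ((hv.2 0 2).mp hh) (by decide)) (fun hh => absurd ((hv.2 0 3).mp hh) (by decide)) (fun hh => hw0 hh.symm) (fun hh => absurd ((hv.2 1 3).mp hh) (by decide)) (fun hh => hw1 hh.symm) (fun hh => hzn1 hh.symm) (fun hh => hw2 hh.symm) (fun hh => hzn2 hh.symm) (fun hh => hzn3 hh.symm) (hv.1.ne (show (0:ZMod 5) ≠ 2 by decide)) (hv.1.ne (show (0:ZMod 5) ≠ 3 by decide)) (hwc 0).symm (hv.1.ne (show (1:ZMod 5) ≠ 3 by decide)) (hwc 1).symm (hzc 1).symm (hwc 2).symm (hzc 2).symm (hzc 3).symm).elim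
            · by_cases hw4 : G.Adj w (v 4)
              · exact (noC4x hC4 (v 0) (v 4) w z ((hv.2 0 4).mpr (by decide)) hw4.symm hzw.symm hz0.symm (fun hh => hw0 hh.symm) (fun hh => hzn4 hh.symm) (hwc 0).symm (hzc 4).symm).elim
              · exact (noP6x hP6 (v 2) (v 3) (v 4) (v 0) z w ((hv.2 2 3).mpr (by decide)) ((hv.2 3 4).mpr (by decide)) ((hv.2 4 0).mpr (by decide)) hz0.symm hzw (fun hh => absurd ((hv.2 2 4).mp hh) (by decide)) (fun hh => (fun hh => absurd ((hv.2 0 2).mp hh) (by decide)) hh.symm) (fun hh => hzn2 hh.symm) (fun hh => hw2 hh.symm) (fun hh => (fun hh => absurd ((hv.2 0 3).mp hh) (by decide)) hh.symm) (fun hh => hzn3 hh.symm) (fun hh => hw3 hh.symm) (fun hh => hzn4 hh.symm) (fun hh => hw4 hh.symm) (fun hh => hw0 hh.symm) (hv.1.ne (show (2:ZMod 5) ≠ 4 by decide)) (hv.1.ne (show (0:ZMod 5) ≠ 2 by decide)).symm (hzc 2).symm (hwc 2).symm (hv.1.ne (show (0:ZMod 5) ≠ 3 by decide)).symm (hzc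 3).symm (hwc 3).symm (hzc 4).symm (hwc 4).symm (hwc 0).symm).elim
  -- ===== X–Y adjacency (cliqueness of the cutset across S(1,2,3), S(5,1,2)) =====
  have hYb : ∀ y, SY y → y ≠ b → G.Adj y b := by
    intro y hy hne
    by_contra hnadj
    exact noC4x hC4 y (v 0) b (v 2) ((hy.2.1 0).mpr (by decide)) hb0.symm hb2
      ((hy.2.1 2).mpr (by decide)) hnadj
      (fun h => absurd ((hv.2 0 2).mp h) (by decide)) hne (hv.1.ne (by decide))
  have hXYadj : ∀ x y, SX x → SY y → G.Adj x y := by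
    intro x y hx hy
    by_contra hnxy
    obtain ⟨hxc, hxm, hxb, z1, hz1, hxz1'⟩ := hx
    obtain ⟨hyc, hym, z2, hz2, hyz2'⟩ := hy
    have hxz1 : G.Adj x z1 := hxz1'
    have hyz2 : G.Adj y z2 := hyz2'
    by_cases hybe : y = b
    · exact hnxy (hybe.symm ▸ hxb)
    have hyb : G.Adj y b := hYb y ⟨hyc, hym, z2, hz2, hyz2⟩ hybe
    have hxa4 : G.Adj x (v 4) := (hxm 4).mpr (by decide)
    have hxa0 : G.Adj x (v 0) := (hxm 0).mpr (by decide)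
    have hxa1 : G.Adj x (v 1) := (hxm 1).mpr (by decide)
    have hxn2 : ¬G.Adj x (v 2) := fun h => by have := (hxm 2).mp h; revert this; decide
    have hxn3 : ¬G.Adj x (v 3) := fun h => by have := (hxm 3).mp h; revert this; decide
    have hya0 : G.Adj y (v 0) := (hym 0).mpr (by decide)
    have hya1 : G.Adj y (v 1) := (hym 1).mpr (by decide)
    have hya2 : G.Adj y (v 2) := (hym 2).mpr (by decide)
    have hyn3 : ¬G.Adj y (v 3) := fun h => by have := (hym 3).mp h; revert this; decide
    have hyn4 : ¬G.Adj y (v 4) := fun h => by have := (hym 4).mp h; revert this; decide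
    have hz1c : ∀ i, z1 ≠ v i := hz1.1
    have hz1a0 : G.Adj z1 (v 0) := (hz1.2.1 0).mpr rfl
    have hz1n1 : ¬G.Adj z1 (v 1) := fun h => by have := (hz1.2.1 1).mp h; revert this; decide
    have hz1n2 : ¬G.Adj z1 (v 2) := fun h => by have := (hz1.2.1 2).mp h; revert this; decide
    have hz1n3 : ¬G.Adj z1 (v 3) := fun h => by have := (hz1.2.1 3).mp h; revert this; decide
    have hz1n4 : ¬G.Adj z1 (v 4) := fun h => by have := (hz1.2.1 4).mp h; revert this; decide
    have hz1b : G.Adj z1 b := hz1.2.2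
    have hz2c : ∀ i, z2 ≠ v i := hz2.1
    have hz2a0 : G.Adj z2 (v 0) := (hz2.2.1 0).mpr rfl
    have hz2n1 : ¬G.Adj z2 (v 1) := fun h => by have := (hz2.2.1 1).mp h; revert this; decide
    have hz2n2 : ¬G.Adj z2 (v 2) := fun h => by have := (hz2.2.1 2).mp h; revert this; decide
    have hz2n3 : ¬G.Adj z2 (v 3) := fun h => by have := (hz2.2.1 3).mp h; revert this; decide
    have hz2n4 : ¬G.Adj z2 (v 4) := fun h => by have := (hz2.2.1 4).mp h; revert this; decide
    have hz2b : G.Adj z2 b := hz2.2.2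
    by_cases hyz1 : G.Adj y z1
    · exact noC4x hC4 (v 1) x z1 y hxa1.symm hxz1 hyz1.symm hya1.symm
        (fun hh => hz1n1 hh.symm) hnxy (hz1c 1).symm (fun he => hxn2 (he.symm ▸ hya2))
    by_cases hxz2 : G.Adj x z2
    · exact noC4x hC4 (v 1) x z2 y hxa1.symm hxz2 hyz2.symm hya1.symm
        (fun hh => hz2n1 hh.symm) hnxy (hz2c 1).symm (fun he => hxn2 (he.symm ▸ hya2))
    by_cases h12 : G.Adj z1 z2
    · exact noP6x hP6 (v 2) (v 3) (v 4) x z1 z2 ((hv.2 2 3).mpr (by decide)) ((hv.2 3 4).mpr (by decide)) hxa4.symm hxz1 h12 (fun hh => absurd ((hv.2 2 4).mp hh) (by decide)) (fun hh => hxn2 hh.symm) (fun hh => hz1n2 hh.symm) (fun hh => hz2n2 hh.symm) (fun hh => hxn3 hh.symm) (fun hh => hz1n3 hh.symm) (fun hh => hz2n3 hh.symm) (fun hh => hz1n4 hh.symm) (fun hh => hz2n4 hh.symm) hxz2 (hv.1.ne (show (2:ZMod 5) ≠ 4 by decide)) (hxc 2).symm (hz1c 2).symm (hz2c 2).symm (hxc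 3).symm (hz1c 3).symm (hz2c 3).symm (hz1c 4).symm (hz2c 4).symm (fun he => hz2n4 (he ▸ hxa4))
    · exact noP6x hP6 (v 3) (v 4) x (v 1) y z2 ((hv.2 3 4).mpr (by decide)) hxa4.symm hxa1 hya1.symm hyz2 (fun hh => hxn3 hh.symm) (fun hh => absurd ((hv.2 3 1).mp hh) (by decide)) (fun hh => hyn3 hh.symm) (fun hh => hz2n3 hh.symm) (fun hh => absurd ((hv.2 4 1).mp hh) (by decide)) (fun hh => hyn4 hh.symm) (fun hh => hz2n4 hh.symm) hnxy hxz2 (fun hh => hz2n1 hh.symm) (hxc 3).symm ((hv.1.ne (show (1:ZMod 5) ≠ 3 by decide))).symm (hyc 3).symm (hz2c 3).symm ((hv.1.ne (show (1:ZMod 5) ≠ 4 by decide))).symm (hyc 4).symm (hz2c 4).symm (fun he => hxn2 (he.symm ▸ hya2)) (fun he => hz2n4 (he ▸ hxa4)) (hz2c 1).symm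
  -- ===== K is a clique =====
  have hKclique : G.IsClique K := by
    intro p hp q hq hpq
    have force : ∀ r s : V, G.Adj r (v 0) → G.Adj r (v 2) → G.Adj s (v 0) → G.Adj s (v 2) →
        r ≠ s → G.Adj r s := by
      intro r s hr0 hr2 hs0 hs2 hrs
      by_contra hne
      exact noC4x hC4 r (v 0) s (v 2) hr0 hs0.symm hs2 hr2 hne
        (fun h => absurd ((hv.2 0 2).mp h) (by decide)) hrs (hv.1.ne (by decide))
    have force41 : ∀ r s : V, G.Adj r (v 4) → G.Adj r (v 1) → G.Adj s (v 4) → G.Adj s (v 1) →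
        r ≠ s → G.Adj r s := by
      intro r s hr4 hr1 hs4 hs1 hrs
      by_contra hne
      exact noC4x hC4 r (v 4) s (v 1) hr4 hs4.symm hs1 hr1 hne
        (fun h => absurd ((hv.2 4 1).mp h) (by decide)) hrs (hv.1.ne (by decide))
    have hS5a : ∀ u, S5 u → ∀ i, G.Adj u (v i) := fun u hu => hu.2
    rcases hp with rfl | rfl | h5p | hyp | hxp
    · -- p = v 0
      rcases hq with rfl | rfl | h5q | hyq | hxq
      · exact absurd rfl hpq
      · exact hb0.symm
      · exact (h5q.2 0).symm
      · exact ((hyq.2.1 0).mpr (by decide)).symm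
      · exact ((hxq.2.1 0).mpr (by decide)).symm
    · -- p = b
      rcases hq with rfl | rfl | h5q | hyq | hxq
      · exact hb0
      · exact absurd rfl hpq
      · exact (hS5b q h5q).symm
      · exact (hYb q hyq (Ne.symm hpq)).symm
      · exact hxq.2.2.1.symm
    · -- S5 p
      rcases hq with rfl | rfl | h5q | hyq | hxq
      · exact h5p.2 0
      · exact hS5b p h5p
      · exact force p q (h5p.2 0) (h5p.2 2) (h5q.2 0) (h5q.2 2) hpq
      · exact force p q (h5p.2 0) (h5p.2 2) ((hyq.2.1 0).mpr (by decide))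
          ((hyq.2.1 2).mpr (by decide)) hpq
      · exact force41 p q (h5p.2 4) (h5p.2 1) ((hxq.2.1 4).mpr (by decide))
          ((hxq.2.1 1).mpr (by decide)) hpq
    · -- SY p
      rcases hq with rfl | rfl | h5q | hyq | hxq
      · exact (hyp.2.1 0).mpr (by decide)
      · exact hYb p hyp hpq
      · exact force p q ((hyp.2.1 0).mpr (by decide)) ((hyp.2.1 2).mpr (by decide))
          (h5q.2 0) (h5q.2 2) hpq
      · exact force p q ((hyp.2.1 0).mpr (by decide)) ((hyp.2.1 2).mpr (by decide))
          ((hyq.2.1 0).mpr (by decide)) ((hyq.2.1 2).mpr (by decide)) hpq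
      · exact (hXYadj q p hxq hyp).symm
    · -- SX p
      rcases hq with rfl | rfl | h5q | hyq | hxq
      · exact (hxp.2.1 0).mpr (by decide)
      · exact hxp.2.2.1
      · exact force41 p q ((hxp.2.1 4).mpr (by decide)) ((hxp.2.1 1).mpr (by decide))
          (h5q.2 4) (h5q.2 1) hpq
      · exact hXYadj p q hxp hyq
      · exact force41 p q ((hxp.2.1 4).mpr (by decide)) ((hxp.2.1 1).mpr (by decide))
          ((hxq.2.1 4).mpr (by decide)) ((hxq.2.1 1).mpr (by decide)) hpq
  -- ===== the cutset argument =====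
  have hv1K : (v 1) ∉ K := by
    intro hmem
    rcases hmem with h | h | h | h | h
    · exact absurd h (hv.1.ne (by decide))
    · exact (hbc 1) h.symm
    · exact h.1 1 rfl
    · exact h.1 1 rfl
    · exact h.1 1 rfl
  have hv3K : (v 3) ∉ K := by
    intro hmem
    rcases hmem with h | h | h | h | h
    · exact absurd h (hv.1.ne (by decide))
    · exact (hbc 3) h.symm
    · exact h.1 3 rfl
    · exact h.1 3 rfl
    · exact h.1 3 rfl
  have han1 : ¬G.Adj a (v 1) := fun h => by have := (ham 1).mp h; revert this; decide
  have han4 : ¬G.Adj a (v 4) := fun h => by have := (ham 4).mp h; revert this; decide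
  have haK : a ∉ K := by
    intro hmem
    rcases hmem with h | h | h | h | h
    · exact ha.1 0 h
    · exact hab.ne h
    · exact han1 (h.2 1)
    · exact han1 ((h.2.1 1).mpr (by decide))
    · exact han4 ((h.2.1 4).mpr (by decide))
  have conf : ∀ (s t : ↥(Kᶜ : Set V)), (G.induce Kᶜ).Reachable s t → (PP s.1 → PP t.1) := by
    intro s t hr
    obtain ⟨wk⟩ := hr
    induction wk with
    | nil => exact id
    | cons hadj tail ih =>
      intro hs
      refine ih ?_
      rename_i p q r
      have step := typing p.1 q.1 hs hadj
      exact step.resolve_left q.2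
  have hKadj : ∀ k ∈ K, ∃ w, w ∉ K ∧ G.Adj k w := by
    intro k hk
    refine ⟨v 1, hv1K, ?_⟩
    rcases hk with rfl | rfl | h | h | h
    · exact (hv.2 0 1).mpr (by decide)
    · exact hb1
    · exact h.2 1
    · exact (h.2.1 1).mpr (by decide)
    · exact (h.2.1 1).mpr (by decide)
  have ha0 : G.Adj a (v 0) := (ham 0).mpr rfl
  have hreach : G.Reachable a (v 3) :=
    ha0.reachable.trans (((hv.2 0 1).mpr (by decide)).reachable.trans
      (((hv.2 1 2).mpr (by decide)).reachable.trans ((hv.2 2 3).mpr (by decide)).reachable))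
  have hnr : ¬ (G.induce Kᶜ).Reachable ⟨a, haK⟩ ⟨v 3, hv3K⟩ :=
    fun hr => (conf _ _ hr hPa).1 3 rfl
  exact cutset_contra hsa.1 K hKclique a (v 3) haK hv3K hreach hnr hKadj

theorem cycSdeg_reindex {V : Type*} (G : SimpleGraph V) (v : ZMod 5 → V)
    (σ : ZMod 5 ≃ ZMod 5) (f : ZMod 5 → V) (hf : ∀ j, f j = v (σ j)) (n : ℕ) :
    cycSdeg G f n = cycSdeg G v n := by
  ext u
  simp only [cycSdeg, Set.mem_setOf_eq]
  constructor
  · rintro ⟨h1, h2⟩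
    refine ⟨fun i => ?_, ?_⟩
    · have := h1 (σ.symm i)
      rw [hf (σ.symm i), σ.apply_symm_apply] at this
      exact this
    · have himg : {i : ZMod 5 | G.Adj u (v i)} = σ '' {j | G.Adj u (f j)} := by
        ext i
        constructor
        · intro hi
          exact ⟨σ.symm i, by rw [Set.mem_setOf_eq, hf, σ.apply_symm_apply]; exact hi,
            σ.apply_symm_apply i⟩
        · rintro ⟨j, hj, rfl⟩
          rw [Set.mem_setOf_eq, hf] at hj
          exact hj
      rw [himg, Set.ncard_image_of_injective _ σ.injective]
      exact h2
  · rintro ⟨h1, h2⟩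
    refine ⟨fun j => by rw [hf]; exact h1 (σ j), ?_⟩
    have himg : {j : ZMod 5 | G.Adj u (f j)} = σ.symm '' {i | G.Adj u (v i)} := by
      ext j
      constructor
      · intro hj
        rw [Set.mem_setOf_eq, hf] at hj
        exact ⟨σ j, hj, σ.symm_apply_apply j⟩
      · rintro ⟨i, hi, rfl⟩
        rw [Set.mem_setOf_eq, hf, σ.apply_symm_apply]
        exact hi
    rw [himg, Set.ncard_image_of_injective _ σ.symm.injective]
    exact h2

theorem stmt_9 {V : Type*} [Fintype V] (G : SimpleGraph V)
    (hC4 : _root_.Free G (cycleGraph 4)) (hC6 : _root_.Free G (cycleGraph 6))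
    (hF1 : _root_.Free G F1) (hF2 : _root_.Free G F2) (hP6 : _root_.Free G (pathGraph 6))
    (hsa : IsStrongAtom G)
    (v : ZMod 5 → V) (hv : IsInducedC5 G v)
    (hmax5 : ∀ w : ZMod 5 → V, IsInducedC5 G w →
      (cycSdeg G w 5).ncard ≤ (cycSdeg G v 5).ncard)
    (hmin3 : ∀ w : ZMod 5 → V, IsInducedC5 G w →
      (cycSdeg G w 5).ncard = (cycSdeg G v 5).ncard →
      (cycSdeg G v 3).ncard ≤ (cycSdeg G w 3).ncard)
    (i : ZMod 5) :
    AntiCompleteTo G (cycS G v {i})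
      (cycS G v {i - 2, i - 1, i} ∪ cycS G v {i, i + 1, i + 2}) := by
  intro a ha b hbmem hadj
  rcases hbmem with hbL | hbR
  · -- reflected cycle  w j = v (i - j)
    set w : ZMod 5 → V := fun j => v (i - j) with hw
    have hwc5 : IsInducedC5 G w := by
      constructor
      · intro x y hxy
        have := hv.1 hxy
        linear_combination -this
      · intro j k
        rw [hw]
        simp only []
        rw [hv.2]
        constructor
        · rintro (h | h)
          · right; linear_combination h
          · left; linear_combination h
        · rintro (h | h)
          · right; linear_combination h
          · left; linear_combination h
    have hmax' : ∀ w2 : ZMod 5 → V, IsInducedC5 G w2 →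
        (cycSdeg G w2 5).ncard ≤ (cycSdeg G w 5).ncard := by
      intro w2 hw2
      have he : cycSdeg G w 5 = cycSdeg G v 5 :=
        cycSdeg_reindex G v (Equiv.subLeft i) w (fun j => rfl) 5
      rw [he]
      exact hmax5 w2 hw2
    have ha' : a ∈ cycS G w {0} := by
      refine ⟨fun j => ha.1 (i - j), fun j => ?_⟩
      constructor
      · intro h
        have h2 : i - j = i := (ha.2 (i - j)).mp h
        show j = 0
        linear_combination -h2
      · intro h
        have hj : j = (0 : ZMod 5) := h
        subst hj
        exact (ha.2 (i - 0)).mpr (by simp)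
    have hb' : b ∈ cycS G w {(0 : ZMod 5), 1, 2} := by
      refine ⟨fun j => hbL.1 (i - j), fun j => ?_⟩
      constructor
      · intro h
        have h2 := (hbL.2 (i - j)).mp h
        simp only [Set.mem_insert_iff, Set.mem_singleton_iff] at h2 ⊢
        rcases h2 with h2 | h2 | h2
        · right; right; linear_combination -h2
        · right; left; linear_combination -h2
        · left; linear_combination -h2
      · intro h
        simp only [Set.mem_insert_iff, Set.mem_singleton_iff] at h
        refine (hbL.2 (i - j)).mpr ?_
        simp only [Set.mem_insert_iff, Set.mem_singleton_iff]
        rcases h with h | h | h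
        · right; right; linear_combination -h
        · right; left; linear_combination -h
        · left; linear_combination -h
    exact core G hC4 hC6 hF1 hF2 hP6 hsa w hwc5 hmax' a b ha' hb' hadj
  · -- shifted cycle  w j = v (i + j)
    set w : ZMod 5 → V := fun j => v (i + j) with hw
    have hwc5 : IsInducedC5 G w := by
      constructor
      · intro x y hxy
        have := hv.1 hxy
        linear_combination this
      · intro j k
        rw [hw]
        simp only []
        rw [hv.2]
        constructor
        · rintro (h | h)
          · left; linear_combination h
          · right; linear_combination h
        · rintro (h | h)
          · left; linear_combination h
          · right; linear_combination h
    have hmax' : ∀ w2 : ZMod 5 → V, IsInducedC5 G w2 →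
        (cycSdeg G w2 5).ncard ≤ (cycSdeg G w 5).ncard := by
      intro w2 hw2
      have he : cycSdeg G w 5 = cycSdeg G v 5 :=
        cycSdeg_reindex G v (Equiv.addLeft i) w (fun j => rfl) 5
      rw [he]
      exact hmax5 w2 hw2
    have ha' : a ∈ cycS G w {0} := by
      refine ⟨fun j => ha.1 (i + j), fun j => ?_⟩
      constructor
      · intro h
        have h2 : i + j = i := (ha.2 (i + j)).mp h
        show j = 0
        linear_combination h2
      · intro h
        have hj : j = (0 : ZMod 5) := h
        subst hj
        exact (ha.2 (i + 0)).mpr (by simp)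
    have hb' : b ∈ cycS G w {(0 : ZMod 5), 1, 2} := by
      refine ⟨fun j => hbR.1 (i + j), fun j => ?_⟩
      constructor
      · intro h
        have h2 := (hbR.2 (i + j)).mp h
        simp only [Set.mem_insert_iff, Set.mem_singleton_iff] at h2 ⊢
        rcases h2 with h2 | h2 | h2
        · left; linear_combination h2
        · right; left; linear_combination h2
        · right; right; linear_combination h2
      · intro h
        simp only [Set.mem_insert_iff, Set.mem_singleton_iff] at h
        refine (hbR.2 (i + j)).mpr ?_
        simp only [Set.mem_insert_iff, Set.mem_singleton_iff]
        rcases h with h | h | h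
        · left; linear_combination h
        · right; left; linear_combination h
        · right; right; linear_combination h
    exact core G hC4 hC6 hF1 hF2 hP6 hsa w hwc5 hmax' a b ha' hb' hadj
end
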